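/- arXiv:0810.2154 — 6 statements merged into one kernel-verified Lean document; each statement's English description precedes it below -/
import Mathlib

section
/- In the max-relaxation iteration for an irreducible finite matrix set 𝒜, let ρ⁺ = lim ρ⁺_n and ρ⁻ = lim ρ⁻_n (these limits exist by monotonicity), set γ = γ(ρ⁻, ρ⁺), and suppose a subsequence of normalized norms ‖·‖°_{n_k} converges uniformly on bounded subsets of ℝ^m to a norm N_0. Define recursively N_{j+1}(x) = max{N_j(x), γ^{-1} max_{1≤i≤r} N_j(A_i x)}. Then for every j ≥ 0: (a) the norms x ↦ ‖x‖_{n_k + j}/‖e‖_{n_k} converge, as k → ∞, uniformly on bounded subsets of ℝ^m to N_j; and (b) max_{x≠0} (max_i N_j(A_i x))/N_j(x) = ρ⁺ and min_{x≠0} (max_i N_j(A_i x))/N_j(x) = ρ⁻. -/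
open Matrix Filter Topology Bornology Pointwise

/-- `N` is a norm on `ℝ^m`: nonnegative, definite, absolutely homogeneous, subadditive. -/
def IsNorm {m : ℕ} (N : (Fin m → ℝ) → ℝ) : Prop :=
  (∀ x, 0 ≤ N x) ∧ (∀ x, N x = 0 → x = 0) ∧
    (∀ (t : ℝ) (x), N (t • x) = |t| * N x) ∧ (∀ x y, N (x + y) ≤ N x + N y)

/-- `N` is a seminorm on `ℝ^m`. -/
def IsSeminorm {m : ℕ} (N : (Fin m → ℝ) → ℝ) : Prop :=
  (∀ x, 0 ≤ N x) ∧
    (∀ (t : ℝ) (x), N (t • x) = |t| * N x) ∧ (∀ x y, N (x + y) ≤ N x + N y)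

/-- The family `A` is irreducible: the matrices have no common invariant subspace
other than `⊥` and `⊤`. -/
def IsIrreducibleFamily {m r : ℕ} (A : Fin r → Matrix (Fin m) (Fin m) ℝ) : Prop :=
  ∀ W : Submodule ℝ (Fin m → ℝ), (∀ i, ∀ x ∈ W, (A i).mulVec x ∈ W) → W = ⊥ ∨ W = ⊤

/-- The operator norm of a matrix acting on `ℝ^m` (with its sup norm). -/
noncomputable def matNorm {m : ℕ} (M : Matrix (Fin m) (Fin m) ℝ) : ℝ :=
  ‖LinearMap.toContinuousLinearMap M.mulVecLin‖

/-- The joint spectral radius of the family `A`: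
`limsup_n (max over words of length n of the norm of the product)^(1/n)`. -/
noncomputable def jsr {m r : ℕ} (A : Fin r → Matrix (Fin m) (Fin m) ℝ) : ℝ :=
  Filter.atTop.limsup fun n : ℕ =>
    (⨆ w : Fin n → Fin r, matNorm (List.ofFn fun k => A (w k)).prod) ^ (1 / (n : ℝ))

/-- `maxA A N x = max_i N (A_i x)`. -/
noncomputable def maxA {m r : ℕ} (A : Fin r → Matrix (Fin m) (Fin m) ℝ)
    (N : (Fin m → ℝ) → ℝ) (x : Fin m → ℝ) : ℝ :=
  ⨆ i, N ((A i).mulVec x)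

/-- `ρ⁺ = max_{x ≠ 0} (max_i N (A_i x)) / N x`. -/
noncomputable def rhoSup {m r : ℕ} (A : Fin r → Matrix (Fin m) (Fin m) ℝ)
    (N : (Fin m → ℝ) → ℝ) : ℝ :=
  sSup ((fun x => maxA A N x / N x) '' {x | x ≠ 0})

/-- `ρ⁻ = min_{x ≠ 0} (max_i N (A_i x)) / N x`. -/
noncomputable def rhoInf {m r : ℕ} (A : Fin r → Matrix (Fin m) (Fin m) ℝ)
    (N : (Fin m → ℝ) → ℝ) : ℝ :=
  sInf ((fun x => maxA A N x / N x) '' {x | x ≠ 0})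

/-- An averaging function: continuous on positives, `γ t t = t`, and strictly
between `min` and `max` off the diagonal. -/
def IsAveraging (γ : ℝ → ℝ → ℝ) : Prop :=
  ContinuousOn (fun p : ℝ × ℝ => γ p.1 p.2) {p | 0 < p.1 ∧ 0 < p.2} ∧
    (∀ t, 0 < t → γ t t = t) ∧
    ∀ t s, 0 < t → 0 < s → t ≠ s → min t s < γ t s ∧ γ t s < max t s

/-- The max-relaxation iteration: `‖x‖_{n+1} = max (‖x‖_n, γ_n⁻¹ max_i ‖A_i x‖_n)`
where `γ_n = γ (ρ⁻_n, ρ⁺_n)`. -/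
noncomputable def iterN {m r : ℕ} (A : Fin r → Matrix (Fin m) (Fin m) ℝ)
    (γ : ℝ → ℝ → ℝ) (N0 : (Fin m → ℝ) → ℝ) : ℕ → (Fin m → ℝ) → ℝ
  | 0 => N0
  | n + 1 => fun x =>
      max (iterN A γ N0 n x)
        ((γ (rhoInf A (iterN A γ N0 n)) (rhoSup A (iterN A γ N0 n)))⁻¹ *
          maxA A (iterN A γ N0 n) x)

/-- The normalized norms `‖x‖°_n = ‖x‖_n / ‖e‖_n` of the max-relaxation iteration
(for `n = 0` this equals `‖x‖_0` since `‖e‖_0 = 1`). -/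
noncomputable def iterNnorm {m r : ℕ} (A : Fin r → Matrix (Fin m) (Fin m) ℝ)
    (γ : ℝ → ℝ → ℝ) (N0 : (Fin m → ℝ) → ℝ) (e : Fin m → ℝ) (n : ℕ) :
    (Fin m → ℝ) → ℝ :=
  fun x => iterN A γ N0 n x / iterN A γ N0 n e

/-- `e⁺(N, N') = max_{x ≠ 0} N x / N' x`. -/
noncomputable def ePlus {m : ℕ} (N N' : (Fin m → ℝ) → ℝ) : ℝ :=
  sSup ((fun x => N x / N' x) '' {x | x ≠ 0})

/-- `e⁻(N, N') = min_{x ≠ 0} N x / N' x`. -/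
noncomputable def eMinus {m : ℕ} (N N' : (Fin m → ℝ) → ℝ) : ℝ :=
  sInf ((fun x => N x / N' x) '' {x | x ≠ 0})

/-- The eccentricity of the norm `N` with respect to the norm `N'`. -/
noncomputable def ecc {m : ℕ} (N N' : (Fin m → ℝ) → ℝ) : ℝ :=
  ePlus N N' / eMinus N N'


lemma IsNorm.isSeminorm {m : ℕ} {N : (Fin m → ℝ) → ℝ} (h : IsNorm N) : IsSeminorm N :=
  ⟨h.1, h.2.2.1, h.2.2.2⟩

lemma IsSeminorm.zero {m : ℕ} {N : (Fin m → ℝ) → ℝ} (h : IsSeminorm N) : N 0 = 0 := by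
  have := h.2.1 0 0
  simpa using this

lemma IsSeminorm.neg {m : ℕ} {N : (Fin m → ℝ) → ℝ} (h : IsSeminorm N) (x : Fin m → ℝ) :
    N (-x) = N x := by
  have := h.2.1 (-1) x
  simpa using this

lemma IsSeminorm.abs_sub {m : ℕ} {N : (Fin m → ℝ) → ℝ} (h : IsSeminorm N) (x y : Fin m → ℝ) :
    |N x - N y| ≤ N (x - y) := by
  have h1 : N x ≤ N (x - y) + N y := by
    have := h.2.2 (x - y) y; simpa using this
  have h2 : N y ≤ N (x - y) + N x := by
    have := h.2.2 (y - x) x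
    have e : N (y - x) = N (x - y) := by
      rw [show y - x = -(x - y) by ring, h.neg]
    simpa [e] using this
  rw [abs_sub_le_iff]; constructor <;> linarith

lemma IsSeminorm.le_const_norm {m : ℕ} {N : (Fin m → ℝ) → ℝ} (h : IsSeminorm N) :
    ∃ b : ℝ, 0 ≤ b ∧ ∀ x, N x ≤ b * ‖x‖ := by
  refine ⟨∑ i : Fin m, N ((Pi.single i 1 : Fin m → ℝ)), Finset.sum_nonneg fun i _ => h.1 _, fun x => ?_⟩
  have hx : x = ∑ i : Fin m, x i • ((Pi.single i 1 : Fin m → ℝ)) := by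
    ext j; simp [Pi.single_apply]
  have triag : ∀ (s : Finset (Fin m)) (f : Fin m → (Fin m → ℝ)),
      N (∑ i ∈ s, f i) ≤ ∑ i ∈ s, N (f i) := by
    classical
    intro s f
    induction s using Finset.induction with
    | empty => simp [h.zero]
    | @insert _ _ hni ih =>
      rw [Finset.sum_insert hni, Finset.sum_insert hni]
      exact (h.2.2 _ _).trans (by linarith)
  calc N x = N (∑ i : Fin m, x i • ((Pi.single i 1 : Fin m → ℝ))) := by rw [← hx]
    _ ≤ ∑ i : Fin m, N (x i • ((Pi.single i 1 : Fin m → ℝ))) := triag _ _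
    _ = ∑ i : Fin m, |x i| * N ((Pi.single i 1 : Fin m → ℝ)) := by
        congr 1; ext i; exact h.2.1 _ _
    _ ≤ ∑ i : Fin m, ‖x‖ * N ((Pi.single i 1 : Fin m → ℝ)) := by
        apply Finset.sum_le_sum; intro i _
        exact mul_le_mul_of_nonneg_right (by simpa using norm_le_pi_norm x i) (h.1 _)
    _ = (∑ i : Fin m, N ((Pi.single i 1 : Fin m → ℝ))) * ‖x‖ := by
        rw [Finset.sum_mul]; congr 1; ext i; ring

lemma IsSeminorm.lipschitz {m : ℕ} {N : (Fin m → ℝ) → ℝ} (h : IsSeminorm N) :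
    ∃ b : ℝ, 0 ≤ b ∧ (∀ x, N x ≤ b * ‖x‖) ∧ ∀ x y, |N x - N y| ≤ b * ‖x - y‖ :=
  let ⟨b, hb, hbx⟩ := h.le_const_norm
  ⟨b, hb, hbx, fun x y => (h.abs_sub x y).trans (hbx _)⟩

lemma IsSeminorm.continuous {m : ℕ} {N : (Fin m → ℝ) → ℝ} (h : IsSeminorm N) :
    Continuous N := by
  obtain ⟨b, hb, _, hl⟩ := h.lipschitz
  apply continuous_iff_continuousAt.2
  intro x
  apply Metric.continuousAt_iff.2
  intro ε hε
  rcases eq_or_lt_of_le hb with hb0 | hb0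
  · exact ⟨1, one_pos, fun {y} _ => by
      have h2 := hl y x; rw [← hb0] at h2; simp at h2
      have : dist (N y) (N x) = 0 := by
        rw [Real.dist_eq, h2, abs_zero]
      simpa [this] using hε⟩
  · refine ⟨ε / b, div_pos hε hb0, fun {y} hy => ?_⟩
    have := hl y x
    have : |N y - N x| ≤ b * dist y x := by simpa [dist_eq_norm] using this
    calc dist (N y) (N x) = |N y - N x| := Real.dist_eq _ _
      _ ≤ b * dist y x := this
      _ < b * (ε / b) := by exact mul_lt_mul_of_pos_left hy hb0
      _ = ε := by field_simp

section MaxA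
variable {m r : ℕ} (A : Fin r → Matrix (Fin m) (Fin m) ℝ)

lemma maxA_nonneg {N : (Fin m → ℝ) → ℝ} (hN : ∀ x, 0 ≤ N x) (x : Fin m → ℝ) :
    0 ≤ maxA A N x := by
  rcases Nat.eq_zero_or_pos r with h0 | hpos
  · subst h0; simp [maxA, Real.iSup_of_isEmpty]
  · have : Nonempty (Fin r) := ⟨⟨0, hpos⟩⟩
    exact le_ciSup_of_le (Set.finite_range _).bddAbove (Classical.arbitrary _) (hN _)

lemma maxA_le {N : (Fin m → ℝ) → ℝ} {x : Fin m → ℝ} {c : ℝ}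
    (hc : 0 ≤ c) (h : ∀ i, N ((A i).mulVec x) ≤ c) : maxA A N x ≤ c := by
  rcases Nat.eq_zero_or_pos r with h0 | hpos
  · subst h0; simpa [maxA, Real.iSup_of_isEmpty] using hc
  · have : Nonempty (Fin r) := ⟨⟨0, hpos⟩⟩
    exact ciSup_le (fun i => h i)

lemma le_maxA {N : (Fin m → ℝ) → ℝ} (i : Fin r) (x : Fin m → ℝ) :
    N ((A i).mulVec x) ≤ maxA A N x := by
  unfold maxA
  exact le_ciSup (f := fun i => N ((A i).mulVec x)) (Set.finite_range _).bddAbove i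

lemma maxA_smul {N : (Fin m → ℝ) → ℝ} (hN : ∀ t x, N (t • x) = |t| * N x)
    (t : ℝ) (x : Fin m → ℝ) : maxA A N (t • x) = |t| * maxA A N x := by
  unfold maxA
  rw [Real.mul_iSup_of_nonneg (abs_nonneg t)]
  congr 1; ext i
  rw [Matrix.mulVec_smul, hN]

lemma maxA_div {N : (Fin m → ℝ) → ℝ} {c : ℝ} (hc : 0 ≤ c) (x : Fin m → ℝ) :
    maxA A (fun y => N y / c) x = maxA A N x / c := by
  unfold maxA
  simp only [div_eq_inv_mul]
  exact (Real.mul_iSup_of_nonneg (inv_nonneg.2 hc) _).symm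

lemma isSeminorm_maxA {N : (Fin m → ℝ) → ℝ} (hN : IsSeminorm N) :
    IsSeminorm (maxA A N) := by
  refine ⟨maxA_nonneg A hN.1, maxA_smul A hN.2.1, fun x y => ?_⟩
  apply maxA_le A (add_nonneg (maxA_nonneg A hN.1 x) (maxA_nonneg A hN.1 y))
  intro i
  rw [Matrix.mulVec_add]
  exact (hN.2.2 _ _).trans (add_le_add (le_maxA A i x) (le_maxA A i y))

lemma isSeminorm_smul_maxA {N : (Fin m → ℝ) → ℝ} (hN : IsSeminorm N) {c : ℝ} (hc : 0 ≤ c) :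
    IsSeminorm (fun x => c * maxA A N x) := by
  obtain ⟨h1, h2, h3⟩ := isSeminorm_maxA A hN
  refine ⟨fun x => mul_nonneg hc (h1 x), fun t x => by
    show c * maxA A N (t • x) = |t| * (c * maxA A N x)
    rw [h2]; ring, fun x y => ?_⟩
  show c * maxA A N (x + y) ≤ c * maxA A N x + c * maxA A N y
  calc c * maxA A N (x + y) ≤ c * (maxA A N x + maxA A N y) :=
        mul_le_mul_of_nonneg_left (h3 x y) hc
    _ = c * maxA A N x + c * maxA A N y := by ring

lemma isNorm_max_relax {N : (Fin m → ℝ) → ℝ} (hN : IsNorm N) (c : ℝ) :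
    IsNorm (fun x => max (N x) (c * maxA A N x)) := by
  rcases le_or_gt 0 c with hc | hc
  · obtain ⟨s1, s2, s3⟩ := isSeminorm_smul_maxA A hN.isSeminorm hc
    refine ⟨fun x => le_max_of_le_left (hN.1 x), fun x hx => ?_, fun t x => ?_, fun x y => ?_⟩
    · exact hN.2.1 x (le_antisymm (le_trans (le_max_left _ _) hx.le) (hN.1 x))
    · show max (N (t • x)) (c * maxA A N (t • x)) = |t| * max (N x) (c * maxA A N x)
      rw [hN.2.2.1, show maxA A N (t • x) = |t| * maxA A N x from maxA_smul A hN.2.2.1 t x,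
        mul_max_of_nonneg _ _ (abs_nonneg t)]; ring_nf
    · exact max_le_max (hN.2.2.2 x y) (s3 x y) |>.trans
        (max_le (add_le_add (le_max_left _ _) (le_max_left _ _))
          (add_le_add (le_max_right _ _) (le_max_right _ _)))
  · have he : ∀ x, max (N x) (c * maxA A N x) = N x := fun x =>
      max_eq_left ((mul_nonpos_of_nonpos_of_nonneg hc.le
        (maxA_nonneg A hN.1 x)).trans (hN.1 x))
    simp only [he]
    exact hN
end MaxA

section Rho
variable {m r : ℕ} (A : Fin r → Matrix (Fin m) (Fin m) ℝ)

lemma maxA_pos (hm : 2 ≤ m) (hA : IsIrreducibleFamily A)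
    {N : (Fin m → ℝ) → ℝ} (hN : IsNorm N) {x : Fin m → ℝ} (hx : x ≠ 0) :
    0 < maxA A N x := by
  -- the common kernel is invariant, hence ⊥
  set W : Submodule ℝ (Fin m → ℝ) := ⨅ i, LinearMap.ker (A i).mulVecLin with hW
  have hWinv : ∀ i, ∀ y ∈ W, (A i).mulVec y ∈ W := by
    intro i y hy
    have : (A i).mulVec y = 0 := by
      have := (Submodule.mem_iInf _).1 hy i
      simpa [LinearMap.mem_ker] using this
    rw [this]; exact W.zero_mem
  rcases hA W hWinv with hbot | htop
  · -- x ∉ W, so some A i x ≠ 0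
    have hxW : x ∉ W := fun h => hx (by simpa [hbot] using h)
    rw [hW, Submodule.mem_iInf] at hxW
    push_neg at hxW
    obtain ⟨i, hi⟩ := hxW
    have hne : (A i).mulVec x ≠ 0 := by simpa [LinearMap.mem_ker] using hi
    have hpos : 0 < N ((A i).mulVec x) := by
      rcases lt_or_eq_of_le (hN.1 ((A i).mulVec x)) with h | h
      · exact h
      · exact absurd (hN.2.1 _ h.symm) hne
    exact hpos.trans_le (le_maxA A i _)
  · -- all matrices are zero; then a 1-dim subspace is invariant, contradiction with m ≥ 2
    exfalso
    have hzero : ∀ i, ∀ y : Fin m → ℝ, (A i).mulVec y = 0 := by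
      intro i y
      have : y ∈ W := htop ▸ Submodule.mem_top
      have := (Submodule.mem_iInf _).1 this i
      simpa [LinearMap.mem_ker] using this
    set v : Fin m → ℝ := Pi.single ⟨0, by omega⟩ 1 with hv
    have hvne : v ≠ 0 := by
      intro h
      have := congrFun h ⟨0, by omega⟩
      simp [hv] at this
    have hinv : ∀ i, ∀ y ∈ Submodule.span ℝ ({v} : Set (Fin m → ℝ)), (A i).mulVec y ∈ Submodule.span ℝ ({v} : Set (Fin m → ℝ)) := by
      intro i y _; rw [hzero i y]; exact Submodule.zero_mem _
    rcases hA _ hinv with h | h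
    · apply hvne
      have hv' : v ∈ Submodule.span ℝ ({v} : Set (Fin m → ℝ)) := Submodule.mem_span_singleton_self v
      rw [h] at hv'
      simpa using hv'
    · -- span{v} = ⊤ but Pi.single 1 1 is not a multiple of v
      set w : Fin m → ℝ := Pi.single ⟨1, by omega⟩ 1 with hw
      have : w ∈ Submodule.span ℝ ({v} : Set (Fin m → ℝ)) := h ▸ Submodule.mem_top
      obtain ⟨c, hc⟩ := Submodule.mem_span_singleton.1 this
      have h0 := congrFun hc ⟨0, by omega⟩
      have h1 := congrFun hc ⟨1, by omega⟩
      simp [hw, hv, Pi.single_apply, Fin.ext_iff] at h0 h1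
end Rho

section Rho2
variable {m r : ℕ} (A : Fin r → Matrix (Fin m) (Fin m) ℝ)

lemma IsNorm.pos {N : (Fin m → ℝ) → ℝ} (hN : IsNorm N) {x : Fin m → ℝ} (hx : x ≠ 0) :
    0 < N x := by
  rcases lt_or_eq_of_le (hN.1 x) with h | h
  · exact h
  · exact absurd (hN.2.1 x h.symm) hx

lemma rho_spec (hm : 1 ≤ m) {N : (Fin m → ℝ) → ℝ} (hN : IsNorm N) :
    (∃ x, x ≠ 0 ∧ maxA A N x / N x = rhoSup A N) ∧
    (∀ x, x ≠ 0 → maxA A N x / N x ≤ rhoSup A N) ∧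
    (∃ x, x ≠ 0 ∧ maxA A N x / N x = rhoInf A N) ∧
    (∀ x, x ≠ 0 → rhoInf A N ≤ maxA A N x / N x) := by
  have : Nonempty (Fin m) := ⟨⟨0, by omega⟩⟩
  set f : (Fin m → ℝ) → ℝ := fun x => maxA A N x / N x with hf
  set S : Set (Fin m → ℝ) := Metric.sphere 0 1 with hS
  have hSsub : S ⊆ {x | x ≠ 0} := fun x hx => by
    intro h0
    rw [hS, mem_sphere_zero_iff_norm] at hx
    simp [h0] at hx
  have hSne : S.Nonempty := by
    refine ⟨fun _ => 1, ?_⟩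
    rw [hS, mem_sphere_zero_iff_norm]
    simpa using (Pi.norm_const (1:ℝ) : ‖(fun _ : Fin m => (1:ℝ))‖ = _)
  have hcomp : IsCompact S := isCompact_sphere 0 1
  have hcont : ContinuousOn f S := by
    apply ContinuousOn.div
      ((isSeminorm_maxA A hN.isSeminorm).continuous.continuousOn)
      (hN.isSeminorm.continuous.continuousOn)
    exact fun x hx => (hN.pos (hSsub hx)).ne'
  have himage : f '' {x | x ≠ 0} = f '' S := by
    apply Set.Subset.antisymm
    · rintro - ⟨x, hx, rfl⟩
      have hxne : x ≠ 0 := hx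
      have hnx : ‖x‖ ≠ 0 := norm_ne_zero_iff.2 hxne
      refine ⟨‖x‖⁻¹ • x, ?_, ?_⟩
      · rw [hS, mem_sphere_zero_iff_norm, norm_smul]
        simp [abs_of_nonneg (norm_nonneg x), hnx]
      · rw [hf]
        simp only
        rw [maxA_smul A hN.2.2.1, hN.2.2.1]
        exact mul_div_mul_left _ _ (by simpa using hnx)
    · exact Set.image_mono hSsub
  obtain ⟨xM, hxM, hmax⟩ := hcomp.exists_isMaxOn hSne hcont
  obtain ⟨xm, hxm, hmin⟩ := hcomp.exists_isMinOn hSne hcont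
  have hgreat : IsGreatest (f '' {x | x ≠ 0}) (f xM) := by
    rw [himage]
    exact ⟨⟨xM, hxM, rfl⟩, by rintro - ⟨y, hy, rfl⟩; exact hmax hy⟩
  have hleast : IsLeast (f '' {x | x ≠ 0}) (f xm) := by
    rw [himage]
    exact ⟨⟨xm, hxm, rfl⟩, by rintro - ⟨y, hy, rfl⟩; exact hmin hy⟩
  have hsup : rhoSup A N = f xM := hgreat.csSup_eq.symm ▸ rfl
  have hinf : rhoInf A N = f xm := hleast.csInf_eq.symm ▸ rfl
  refine ⟨⟨xM, hSsub hxM, ?_⟩, fun x hx => ?_, ⟨xm, hSsub hxm, ?_⟩, fun x hx => ?_⟩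
  · rw [hsup]
  · rw [hsup]; exact hgreat.2 ⟨x, hx, rfl⟩
  · rw [hinf]
  · rw [hinf]; exact hleast.2 ⟨x, hx, rfl⟩
end Rho2

section Rho3
variable {m r : ℕ} (A : Fin r → Matrix (Fin m) (Fin m) ℝ)

lemma maxA_le_rhoSup_mul (hm : 1 ≤ m) {N : (Fin m → ℝ) → ℝ} (hN : IsNorm N) (x : Fin m → ℝ) :
    maxA A N x ≤ rhoSup A N * N x := by
  rcases eq_or_ne x 0 with rfl | hx
  · rw [(isSeminorm_maxA A hN.isSeminorm).zero, hN.isSeminorm.zero, mul_zero]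
  · have h := (rho_spec A hm hN).2.1 x hx
    rw [div_le_iff₀ (hN.pos hx)] at h
    exact h

lemma rhoInf_mul_le_maxA (hm : 1 ≤ m) {N : (Fin m → ℝ) → ℝ} (hN : IsNorm N) (x : Fin m → ℝ) :
    rhoInf A N * N x ≤ maxA A N x := by
  rcases eq_or_ne x 0 with rfl | hx
  · rw [(isSeminorm_maxA A hN.isSeminorm).zero, hN.isSeminorm.zero, mul_zero]
  · have h := (rho_spec A hm hN).2.2.2 x hx
    rw [le_div_iff₀ (hN.pos hx)] at h
    exact h

lemma rhoInf_pos (hm : 2 ≤ m) (hA : IsIrreducibleFamily A)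
    {N : (Fin m → ℝ) → ℝ} (hN : IsNorm N) : 0 < rhoInf A N := by
  obtain ⟨x, hx, hval⟩ := (rho_spec A (by omega) hN).2.2.1
  rw [← hval]
  exact div_pos (maxA_pos A hm hA hN hx) (hN.pos hx)

lemma rhoInf_le_rhoSup (hm : 1 ≤ m) {N : (Fin m → ℝ) → ℝ} (hN : IsNorm N) :
    rhoInf A N ≤ rhoSup A N := by
  obtain ⟨x, hx, hval⟩ := (rho_spec A hm hN).2.2.1
  rw [← hval]
  exact (rho_spec A hm hN).2.1 x hx

lemma rho_div {N : (Fin m → ℝ) → ℝ} {c : ℝ} (hc : 0 < c) :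
    rhoSup A (fun x => N x / c) = rhoSup A N ∧ rhoInf A (fun x => N x / c) = rhoInf A N := by
  have key : ∀ x : Fin m → ℝ, maxA A (fun y => N y / c) x / (N x / c) = maxA A N x / N x := by
    intro x
    rw [maxA_div A hc.le]
    rcases eq_or_ne (N x) 0 with h0 | h0
    · simp [h0]
    · field_simp
  have himg : (fun x => maxA A (fun y => N y / c) x / ((fun y => N y / c) x)) '' {x | x ≠ 0}
      = (fun x => maxA A N x / N x) '' {x | x ≠ 0} := by
    apply Set.image_congr
    intro x _
    exact key x
  constructor
  · unfold rhoSup; rw [himg]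
  · unfold rhoInf; rw [himg]
end Rho3

section Lower
variable {m r : ℕ} (A : Fin r → Matrix (Fin m) (Fin m) ℝ)

lemma IsNorm.lower_bound (hm : 1 ≤ m) {N : (Fin m → ℝ) → ℝ} (hN : IsNorm N) :
    ∃ a : ℝ, 0 < a ∧ ∀ x, a * ‖x‖ ≤ N x := by
  have : Nonempty (Fin m) := ⟨⟨0, by omega⟩⟩
  have hSne : (Metric.sphere (0 : Fin m → ℝ) 1).Nonempty := by
    refine ⟨fun _ => 1, ?_⟩
    rw [mem_sphere_zero_iff_norm]
    simpa using (Pi.norm_const (1:ℝ) : ‖(fun _ : Fin m => (1:ℝ))‖ = _)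
  obtain ⟨xm, hxm, hmin⟩ := (isCompact_sphere (0 : Fin m → ℝ) 1).exists_isMinOn hSne
    hN.isSeminorm.continuous.continuousOn
  have hxmne : xm ≠ 0 := by
    intro h0
    rw [mem_sphere_zero_iff_norm] at hxm
    simp [h0] at hxm
  refine ⟨N xm, hN.pos hxmne, fun x => ?_⟩
  rcases eq_or_ne x 0 with rfl | hx
  · simp [hN.isSeminorm.zero]
  · have hnx : (0:ℝ) < ‖x‖ := norm_pos_iff.2 hx
    have hu : (‖x‖⁻¹ • x) ∈ Metric.sphere (0 : Fin m → ℝ) 1 := by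
      rw [mem_sphere_zero_iff_norm, norm_smul]
      simp [abs_of_nonneg (norm_nonneg x), hnx.ne']
    have hmin' : N xm ≤ N (‖x‖⁻¹ • x) := hmin hu
    have he : N (‖x‖⁻¹ • x) = ‖x‖⁻¹ * N x := by
      rw [hN.2.2.1]; congr 1; exact abs_of_pos (by positivity)
    rw [he] at hmin'
    have := mul_le_mul_of_nonneg_right hmin' hnx.le
    calc N xm * ‖x‖ ≤ ‖x‖⁻¹ * N x * ‖x‖ := this
      _ = N x := by field_simp

lemma ratio_smul {N : (Fin m → ℝ) → ℝ} (hhom : ∀ (t : ℝ) x, N (t • x) = |t| * N x)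
    {t : ℝ} (ht : t ≠ 0) (x : Fin m → ℝ) :
    maxA A N (t • x) / N (t • x) = maxA A N x / N x := by
  rw [maxA_smul A hhom, hhom]
  exact mul_div_mul_left _ _ (by simpa using ht)

lemma rho_tendsto (hm : 2 ≤ m)
    {f : ℕ → (Fin m → ℝ) → ℝ} {N : (Fin m → ℝ) → ℝ}
    (hf : ∀ k, IsNorm (f k)) (hN : IsNorm N)
    (hconv : ∀ S : Set (Fin m → ℝ), IsBounded S → TendstoUniformlyOn f N atTop S) :
    Tendsto (fun k => rhoSup A (f k)) atTop (𝓝 (rhoSup A N)) ∧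
    Tendsto (fun k => rhoInf A (f k)) atTop (𝓝 (rhoInf A N)) := by
  have hm1 : 1 ≤ m := by omega
  obtain ⟨a, ha, hal⟩ := hN.lower_bound hm1
  have hρm0 : 0 ≤ rhoInf A N := by
    obtain ⟨x, hx, hval⟩ := (rho_spec A hm1 hN).2.2.1
    rw [← hval]
    exact div_nonneg (maxA_nonneg A hN.1 x) (hN.1 x)
  have hρmp : rhoInf A N ≤ rhoSup A N := rhoInf_le_rhoSup A hm1 hN
  have hρp0 : 0 ≤ rhoSup A N := le_trans hρm0 hρmp
  set ρp := rhoSup A N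
  set ρm := rhoInf A N
  set S : Set (Fin m → ℝ) :=
    Metric.sphere 0 1 ∪ ⋃ i, (fun x => (A i).mulVec x) '' Metric.sphere 0 1 with hSdef
  have hSbdd : IsBounded S := by
    apply IsBounded.union (Metric.isBounded_sphere)
    refine (isBounded_iUnion (ι := Fin r)).mpr fun i => ?_
    exact ((LinearMap.toContinuousLinearMap (A i).mulVecLin).lipschitz.isBounded_image
      Metric.isBounded_sphere)
  have key : ∀ ε > (0:ℝ), ∀ᶠ k in atTop,
      |rhoSup A (f k) - ρp| ≤ ε ∧ |rhoInf A (f k) - ρm| ≤ ε := by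
    intro ε hε
    set δ : ℝ := min (a / 2) (ε * a / (1 + ρp + ε)) with hδdef
    have hδpos : 0 < δ := by
      apply lt_min (by linarith)
      positivity
    have hδa : δ ≤ a / 2 := min_le_left _ _
    have hδe : δ * (1 + ρp + ε) ≤ ε * a := by
      have h1 : δ ≤ ε * a / (1 + ρp + ε) := min_le_right _ _
      rw [le_div_iff₀ (by positivity)] at h1
      linarith
    have hunif := (Metric.tendstoUniformlyOn_iff.1 (hconv S hSbdd)) δ hδpos
    filter_upwards [hunif] with k hk
    have hsub1 : Metric.sphere (0 : Fin m → ℝ) 1 ⊆ S := Set.subset_union_left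
    have hsphere : ∀ x ∈ Metric.sphere (0 : Fin m → ℝ) 1,
        a ≤ N x ∧ N x - δ ≤ f k x ∧ f k x ≤ N x + δ ∧
        maxA A N x - δ ≤ maxA A (f k) x ∧ maxA A (f k) x ≤ maxA A N x + δ := by
      intro x hx
      have h1 : |f k x - N x| ≤ δ := by
        have := hk x (hsub1 hx)
        rw [Real.dist_eq, abs_sub_comm] at this
        exact this.le
      have h2 : ∀ i : Fin r, |f k ((A i).mulVec x) - N ((A i).mulVec x)| ≤ δ := by
        intro i
        have hmem : (A i).mulVec x ∈ S :=
          Set.subset_union_right (Set.mem_iUnion.2 ⟨i, ⟨x, hx, rfl⟩⟩)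
        have := hk _ hmem
        rw [Real.dist_eq, abs_sub_comm] at this
        exact this.le
      have hax : a ≤ N x := by
        have := hal x
        rw [mem_sphere_zero_iff_norm] at hx
        rw [hx] at this; linarith
      obtain ⟨h1a, h1b⟩ := abs_le.1 h1
      refine ⟨hax, by linarith, by linarith, ?_, ?_⟩
      · have : maxA A N x ≤ maxA A (f k) x + δ := by
          apply maxA_le A (by linarith [maxA_nonneg A (hf k).1 x])
          intro i
          obtain ⟨ha2, hb2⟩ := abs_le.1 (h2 i)
          linarith [le_maxA A (N := f k) i x]
        linarith
      · apply maxA_le A (by linarith [maxA_nonneg A hN.1 x])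
        intro i
        obtain ⟨ha2, hb2⟩ := abs_le.1 (h2 i)
        linarith [le_maxA A (N := N) i x]
    -- generic estimates on the sphere
    have hup : ∀ u ∈ Metric.sphere (0 : Fin m → ℝ) 1,
        maxA A (f k) u / f k u ≤ maxA A N u / N u + ε ∧
        maxA A N u / N u - ε ≤ maxA A (f k) u / f k u := by
      intro u huS
      obtain ⟨hau, hfl, hfu, hml, hmu⟩ := hsphere u huS
      have hune : u ≠ 0 := by
        intro h0
        rw [mem_sphere_zero_iff_norm] at huS
        simp [h0] at huS
      have hNupos : 0 < N u := hN.pos hune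
      have hfpos : 0 < f k u := by linarith
      set q : ℝ := maxA A N u / N u with hq
      have hq0 : 0 ≤ q := div_nonneg (maxA_nonneg A hN.1 u) hNupos.le
      have hqp : q ≤ ρp := (rho_spec A hm1 hN).2.1 u hune
      have hMNu : maxA A N u = q * N u := by
        rw [hq]; field_simp
      constructor
      · rw [div_le_iff₀ hfpos]
        have h2 : q * N u + δ ≤ (q + ε) * (N u - δ) := by nlinarith
        have h3 : (q + ε) * (N u - δ) ≤ (q + ε) * f k u :=
          mul_le_mul_of_nonneg_left hfl (by positivity)
        linarith
      · rcases le_or_gt (q - ε) 0 with hneg | hpos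
        · have : 0 ≤ maxA A (f k) u / f k u :=
            div_nonneg (maxA_nonneg A (hf k).1 u) hfpos.le
          linarith
        · rw [le_div_iff₀ hfpos]
          have h2 : (q - ε) * f k u ≤ (q - ε) * (N u + δ) :=
            mul_le_mul_of_nonneg_left hfu hpos.le
          have h3 : (q - ε) * (N u + δ) ≤ q * N u - δ := by nlinarith
          linarith
    constructor
    · rw [abs_sub_le_iff]
      constructor
      · obtain ⟨x0, hx0, hval⟩ := (rho_spec A hm1 (hf k)).1
        have hnx0 : ‖x0‖ ≠ 0 := norm_ne_zero_iff.2 hx0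
        have huS : (‖x0‖⁻¹ • x0) ∈ Metric.sphere (0 : Fin m → ℝ) 1 := by
          rw [mem_sphere_zero_iff_norm, norm_smul]
          simp [abs_of_nonneg (norm_nonneg x0), hnx0]
        have hscale := ratio_smul A (hf k).2.2.1 (t := ‖x0‖⁻¹) (by simpa using hnx0) x0
        have h1 := (hup _ huS).1
        have h2 : maxA A N (‖x0‖⁻¹ • x0) / N (‖x0‖⁻¹ • x0) ≤ ρp :=
          (rho_spec A hm1 hN).2.1 _ (by
            intro h0
            rw [mem_sphere_zero_iff_norm] at huS
            simp [h0] at huS)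
        rw [hscale, hval] at h1
        linarith
      · obtain ⟨x0, hx0, hval⟩ := (rho_spec A hm1 hN).1
        have hnx0 : ‖x0‖ ≠ 0 := norm_ne_zero_iff.2 hx0
        have huS : (‖x0‖⁻¹ • x0) ∈ Metric.sphere (0 : Fin m → ℝ) 1 := by
          rw [mem_sphere_zero_iff_norm, norm_smul]
          simp [abs_of_nonneg (norm_nonneg x0), hnx0]
        have hscale := ratio_smul A hN.2.2.1 (t := ‖x0‖⁻¹) (by simpa using hnx0) x0
        have h1 := (hup _ huS).2
        have h2 : maxA A (f k) (‖x0‖⁻¹ • x0) / f k (‖x0‖⁻¹ • x0) ≤ rhoSup A (f k) :=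
          (rho_spec A hm1 (hf k)).2.1 _ (by
            intro h0
            rw [mem_sphere_zero_iff_norm] at huS
            simp [h0] at huS)
        rw [hscale, hval] at h1
        linarith
    · rw [abs_sub_le_iff]
      constructor
      · obtain ⟨x0, hx0, hval⟩ := (rho_spec A hm1 hN).2.2.1
        have hnx0 : ‖x0‖ ≠ 0 := norm_ne_zero_iff.2 hx0
        have huS : (‖x0‖⁻¹ • x0) ∈ Metric.sphere (0 : Fin m → ℝ) 1 := by
          rw [mem_sphere_zero_iff_norm, norm_smul]
          simp [abs_of_nonneg (norm_nonneg x0), hnx0]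
        have hscale := ratio_smul A hN.2.2.1 (t := ‖x0‖⁻¹) (by simpa using hnx0) x0
        have hune : (‖x0‖⁻¹ • x0) ≠ 0 := by
          intro h0
          rw [mem_sphere_zero_iff_norm] at huS
          simp [h0] at huS
        have h1 := (hup _ huS).1
        have h2 : rhoInf A (f k) ≤ maxA A (f k) (‖x0‖⁻¹ • x0) / f k (‖x0‖⁻¹ • x0) :=
          (rho_spec A hm1 (hf k)).2.2.2 _ hune
        rw [hscale, hval] at h1
        linarith
      · obtain ⟨x0, hx0, hval⟩ := (rho_spec A hm1 (hf k)).2.2.1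
        have hnx0 : ‖x0‖ ≠ 0 := norm_ne_zero_iff.2 hx0
        have huS : (‖x0‖⁻¹ • x0) ∈ Metric.sphere (0 : Fin m → ℝ) 1 := by
          rw [mem_sphere_zero_iff_norm, norm_smul]
          simp [abs_of_nonneg (norm_nonneg x0), hnx0]
        have hscale := ratio_smul A (hf k).2.2.1 (t := ‖x0‖⁻¹) (by simpa using hnx0) x0
        have hune : (‖x0‖⁻¹ • x0) ≠ 0 := by
          intro h0
          rw [mem_sphere_zero_iff_norm] at huS
          simp [h0] at huS
        have h1 := (hup _ huS).2
        have h2 : ρm ≤ maxA A N (‖x0‖⁻¹ • x0) / N (‖x0‖⁻¹ • x0) :=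
          (rho_spec A hm1 hN).2.2.2 _ hune
        rw [hscale, hval] at h1
        linarith
  constructor <;>
  · rw [Metric.tendsto_atTop]
    intro ε hε
    obtain ⟨K, hK⟩ := Filter.eventually_atTop.1 (key (ε / 2) (by linarith))
    refine ⟨K, fun k hk => ?_⟩
    have := hK k hk
    rw [Real.dist_eq]
    first
      | (exact lt_of_le_of_lt this.1 (by linarith))
      | (exact lt_of_le_of_lt this.2 (by linarith))
end Lower

section IterN
variable {m r : ℕ} (A : Fin r → Matrix (Fin m) (Fin m) ℝ)
  (γfun : ℝ → ℝ → ℝ) (Ninit : (Fin m → ℝ) → ℝ)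

lemma isNorm_iterN (hN : IsNorm Ninit) : ∀ n, IsNorm (iterN A γfun Ninit n)
  | 0 => hN
  | (n+1) => isNorm_max_relax A (isNorm_iterN hN n) _

lemma iterN_mono (n : ℕ) (x : Fin m → ℝ) :
    iterN A γfun Ninit n x ≤ iterN A γfun Ninit (n+1) x := le_max_left _ _

lemma iterN_ge (n : ℕ) (x : Fin m → ℝ) : Ninit x ≤ iterN A γfun Ninit n x := by
  induction n with
  | zero => exact le_refl _
  | succ n ih => exact ih.trans (iterN_mono A γfun Ninit n x)

lemma isNorm_div_const {N : (Fin m → ℝ) → ℝ} (hN : IsNorm N) {c : ℝ} (hc : 0 < c) :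
    IsNorm (fun x => N x / c) := by
  refine ⟨fun x => div_nonneg (hN.1 x) hc.le, fun x hx => ?_, fun t x => ?_, fun x y => ?_⟩
  · exact hN.2.1 x (by field_simp at hx; simpa using hx)
  · show N (t • x) / c = |t| * (N x / c)
    rw [hN.2.2.1]; ring
  · show N (x + y) / c ≤ N x / c + N y / c
    rw [← add_div]
    exact div_le_div_of_nonneg_right (hN.2.2.2 x y) hc.le |>.trans (le_refl _)
end IterN

section Unif
variable {m r : ℕ} (A : Fin r → Matrix (Fin m) (Fin m) ℝ)

lemma tendstoUniformlyOn_max {f g : ℕ → (Fin m → ℝ) → ℝ} {F G : (Fin m → ℝ) → ℝ}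
    {S : Set (Fin m → ℝ)}
    (hf : TendstoUniformlyOn f F atTop S) (hg : TendstoUniformlyOn g G atTop S) :
    TendstoUniformlyOn (fun k x => max (f k x) (g k x)) (fun x => max (F x) (G x)) atTop S := by
  rw [Metric.tendstoUniformlyOn_iff] at *
  intro ε hε
  filter_upwards [hf ε hε, hg ε hε] with k hk1 hk2
  intro x hx
  rw [Real.dist_eq]
  calc |max (F x) (G x) - max (f k x) (g k x)| ≤ max |F x - f k x| |G x - g k x| :=
        abs_max_sub_max_le_max _ _ _ _
    _ < ε := max_lt (by rw [← Real.dist_eq]; exact hk1 x hx)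
        (by rw [← Real.dist_eq]; exact hk2 x hx)

lemma tendstoUniformlyOn_maxA {f : ℕ → (Fin m → ℝ) → ℝ} {F : (Fin m → ℝ) → ℝ}
    {S : Set (Fin m → ℝ)}
    (hfpos : ∀ k x, 0 ≤ f k x) (hFpos : ∀ x, 0 ≤ F x)
    (hf : TendstoUniformlyOn f F atTop (⋃ i, (fun x => (A i).mulVec x) '' S)) :
    TendstoUniformlyOn (fun k x => maxA A (f k) x) (fun x => maxA A F x) atTop S := by
  rw [Metric.tendstoUniformlyOn_iff] at *
  intro ε hε
  filter_upwards [hf (ε/2) (by linarith)] with k hk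
  intro x hx
  have hb : ∀ i : Fin r, |F ((A i).mulVec x) - f k ((A i).mulVec x)| ≤ ε/2 := by
    intro i
    have := hk _ (Set.mem_iUnion.2 ⟨i, ⟨x, hx, rfl⟩⟩)
    rw [Real.dist_eq] at this
    exact this.le
  have h1 : maxA A F x ≤ maxA A (f k) x + ε/2 := by
    apply maxA_le A (by linarith [maxA_nonneg A (hfpos k) x])
    intro i
    obtain ⟨ha, hb'⟩ := abs_le.1 (hb i)
    linarith [le_maxA A (N := f k) i x]
  have h2 : maxA A (f k) x ≤ maxA A F x + ε/2 := by
    apply maxA_le A (by linarith [maxA_nonneg A hFpos x])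
    intro i
    obtain ⟨ha, hb'⟩ := abs_le.1 (hb i)
    linarith [le_maxA A (N := F) i x]
  rw [Real.dist_eq]
  have : |maxA A F x - maxA A (f k) x| ≤ ε/2 := abs_sub_le_iff.2 ⟨by linarith, by linarith⟩
  linarith

lemma tendstoUniformlyOn_const_mul {f : ℕ → (Fin m → ℝ) → ℝ} {F : (Fin m → ℝ) → ℝ}
    {a : ℕ → ℝ} {L : ℝ} {S : Set (Fin m → ℝ)} {M : ℝ}
    (ha : Tendsto a atTop (𝓝 L)) (hM : ∀ x ∈ S, |F x| ≤ M)
    (hf : TendstoUniformlyOn f F atTop S) :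
    TendstoUniformlyOn (fun k x => a k * f k x) (fun x => L * F x) atTop S := by
  rw [Metric.tendstoUniformlyOn_iff] at *
  intro ε hε
  have hM' : ∀ x ∈ S, |F x| ≤ max M 0 := fun x hx => (hM x hx).trans (le_max_left _ _)
  clear hM
  set M' := max M 0 with hM'def
  have hM0 : 0 ≤ M' := le_max_right _ _
  have haε := Metric.tendsto_atTop.1 ha
  set δ1 : ℝ := ε / (2 * (|L| + 1)) with hδ1
  set δ2 : ℝ := min 1 (ε / (2 * (M' + 1))) with hδ2
  have hδ1p : 0 < δ1 := by positivity
  have hδ2p : 0 < δ2 := lt_min one_pos (by positivity)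
  filter_upwards [hf δ1 hδ1p, Filter.eventually_atTop.2 (haε δ2 hδ2p)] with k hk1 hk2
  intro x hx
  have hak : |a k - L| < δ2 := by
    have := hk2
    rw [Real.dist_eq] at this
    exact this
  have hakb : |a k| ≤ |L| + 1 := by
    have := abs_sub_abs_le_abs_sub (a k) L
    have h2 : δ2 ≤ 1 := min_le_left _ _
    linarith
  have hfk : |F x - f k x| < δ1 := by
    have := hk1 x hx
    rw [Real.dist_eq] at this
    exact this
  rw [Real.dist_eq]
  have key : L * F x - a k * f k x = a k * (F x - f k x) + (L - a k) * F x := by ring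
  calc |L * F x - a k * f k x| = |a k * (F x - f k x) + (L - a k) * F x| := by rw [key]
    _ ≤ |a k * (F x - f k x)| + |(L - a k) * F x| := abs_add_le _ _
    _ = |a k| * |F x - f k x| + |L - a k| * |F x| := by rw [abs_mul, abs_mul]
    _ ≤ (|L| + 1) * δ1 + δ2 * M' := by
        apply add_le_add
        · exact mul_le_mul hakb hfk.le (abs_nonneg _) (by positivity)
        · rw [abs_sub_comm] at hak
          exact mul_le_mul hak.le (hM' x hx) (abs_nonneg _) hδ2p.le
    _ < ε := by
        have h1 : (|L| + 1) * δ1 = ε / 2 := by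
          rw [hδ1]; field_simp
        have h2 : δ2 * M' ≤ (ε / (2 * (M' + 1))) * M' := by
          apply mul_le_mul_of_nonneg_right (min_le_right _ _) hM0
        have h3 : (ε / (2 * (M' + 1))) * M' < ε / 2 := by
          rw [div_mul_eq_mul_div, div_lt_div_iff₀ (by positivity) (by positivity)]
          nlinarith
        linarith
end Unif


/-- if `ρ⁺ = lim ρ⁺_n`, `ρ⁻ = lim ρ⁻_n`, `γ = γ(ρ⁻,ρ⁺)`, and a subsequence
of normalized norms converges uniformly on bounded sets to `N_0`, then for the recursion
`N_{j+1} x = max (N_j x) (γ⁻¹ max_i N_j (A_i x))`: (a) `‖·‖_{n_k+j}/‖e‖_{n_k} → N_j`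
uniformly on bounded sets, and (b) `rhoSup (N_j) = ρ⁺` and `rhoInf (N_j) = ρ⁻`. -/
theorem stmt12 {m r : ℕ} (hm : 2 ≤ m) (hr : 1 ≤ r)
    (A : Fin r → Matrix (Fin m) (Fin m) ℝ) (hA : IsIrreducibleFamily A)
    (γfun : ℝ → ℝ → ℝ) (hγfun : IsAveraging γfun)
    (Ninit : (Fin m → ℝ) → ℝ) (hNinit : IsNorm Ninit)
    (e : Fin m → ℝ) (he : Ninit e = 1)
    (ρplus ρminus : ℝ)
    (hplus : Tendsto (fun n => rhoSup A (iterN A γfun Ninit n)) atTop (𝓝 ρplus))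
    (hminus : Tendsto (fun n => rhoInf A (iterN A γfun Ninit n)) atTop (𝓝 ρminus))
    (γ : ℝ) (hγ : γ = γfun ρminus ρplus)
    (φ : ℕ → ℕ) (hφ : StrictMono φ)
    (N0 : (Fin m → ℝ) → ℝ)
    (hconv : ∀ S : Set (Fin m → ℝ), IsBounded S →
      TendstoUniformlyOn (fun k => iterNnorm A γfun Ninit e (φ k)) N0 atTop S)
    (Nseq : ℕ → (Fin m → ℝ) → ℝ) (hNseq0 : Nseq 0 = N0)
    (hNrec : ∀ (j : ℕ) (x), Nseq (j + 1) x = max (Nseq j x) (γ⁻¹ * maxA A (Nseq j) x)) :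
    ∀ j : ℕ,
      (∀ S : Set (Fin m → ℝ), IsBounded S →
        TendstoUniformlyOn
          (fun k x => iterN A γfun Ninit (φ k + j) x / iterN A γfun Ninit (φ k) e)
          (Nseq j) atTop S) ∧
      rhoSup A (Nseq j) = ρplus ∧ rhoInf A (Nseq j) = ρminus := by
  
  classical
  have hm1 : 1 ≤ m := by omega
  have hNnorm : ∀ n, IsNorm (iterN A γfun Ninit n) := isNorm_iterN A γfun Ninit hNinit
  have hce : ∀ n, 0 < iterN A γfun Ninit n e := fun n => by
    have h1 := iterN_ge A γfun Ninit n e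
    rw [he] at h1
    linarith
  have hfnorm : ∀ k, IsNorm (iterNnorm A γfun Ninit e (φ k)) := fun k =>
    isNorm_div_const (hNnorm _) (hce _)
  -- pointwise convergence
  have hpt : ∀ x, Tendsto (fun k => iterNnorm A γfun Ninit e (φ k) x) atTop (𝓝 (N0 x)) :=
    fun x => (hconv {x} Bornology.isBounded_singleton).tendsto_at rfl
  -- N0 is nonnegative, homogeneous, subadditive
  have hN0nonneg : ∀ x, 0 ≤ N0 x := fun x =>
    ge_of_tendsto (hpt x) (Filter.Eventually.of_forall fun k => (hfnorm k).1 x)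
  have hN0hom : ∀ (t : ℝ) x, N0 (t • x) = |t| * N0 x := by
    intro t x
    have h1 : (fun k => iterNnorm A γfun Ninit e (φ k) (t • x))
        = fun k => |t| * iterNnorm A γfun Ninit e (φ k) x :=
      funext fun k => (hfnorm k).2.2.1 t x
    have h2 := hpt (t • x)
    rw [h1] at h2
    exact tendsto_nhds_unique h2 ((hpt x).const_mul |t|)
  have hN0add : ∀ x y, N0 (x + y) ≤ N0 x + N0 y := fun x y =>
    le_of_tendsto_of_tendsto' (hpt (x + y)) ((hpt x).add (hpt y))
      (fun k => (hfnorm k).2.2.2 x y)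
  have hN0e : N0 e = 1 := by
    have h1 : (fun k => iterNnorm A γfun Ninit e (φ k) e) = fun _ => (1:ℝ) :=
      funext fun k => div_self (hce (φ k)).ne'
    have h2 := hpt e
    rw [h1] at h2
    exact tendsto_nhds_unique h2 tendsto_const_nhds
  -- rhoSup of normalized norms
  have hrs : ∀ n, rhoSup A (iterNnorm A γfun Ninit e n) = rhoSup A (iterN A γfun Ninit n) :=
    fun n => (rho_div A (hce n)).1
  have hri : ∀ n, rhoInf A (iterNnorm A γfun Ninit e n) = rhoInf A (iterN A γfun Ninit n) :=
    fun n => (rho_div A (hce n)).2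
  have hplusφ : Tendsto (fun k => rhoSup A (iterN A γfun Ninit (φ k))) atTop (𝓝 ρplus) :=
    hplus.comp hφ.tendsto_atTop
  -- N0 is definite
  have hkey : ∀ (i : Fin r) x, N0 ((A i).mulVec x) ≤ ρplus * N0 x := by
    intro i x
    have hseq : ∀ k, iterNnorm A γfun Ninit e (φ k) ((A i).mulVec x)
        ≤ rhoSup A (iterN A γfun Ninit (φ k)) * iterNnorm A γfun Ninit e (φ k) x := by
      intro k
      calc iterNnorm A γfun Ninit e (φ k) ((A i).mulVec x)
          ≤ maxA A (iterNnorm A γfun Ninit e (φ k)) x := le_maxA A i x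
        _ ≤ rhoSup A (iterNnorm A γfun Ninit e (φ k)) * iterNnorm A γfun Ninit e (φ k) x :=
            maxA_le_rhoSup_mul A hm1 (hfnorm k) x
        _ = rhoSup A (iterN A γfun Ninit (φ k)) * iterNnorm A γfun Ninit e (φ k) x := by
            rw [hrs]
    exact le_of_tendsto_of_tendsto' (hpt _) (hplusφ.mul (hpt x)) hseq
  have hN0def : ∀ x, N0 x = 0 → x = 0 := by
    have hW : ∀ x y : Fin m → ℝ, N0 x = 0 → N0 y = 0 → N0 (x + y) = 0 := by
      intro x y hx hy
      refine le_antisymm ?_ (hN0nonneg _)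
      have h3 := hN0add x y
      rw [hx, hy, add_zero] at h3
      exact h3
    set W : Submodule ℝ (Fin m → ℝ) :=
      { carrier := {x | N0 x = 0}
        add_mem' := fun ha hb => hW _ _ ha hb
        zero_mem' := by
          have := hN0hom 0 0
          simpa using this
        smul_mem' := fun c x hx => by
          have : N0 (c • x) = |c| * N0 x := hN0hom c x
          simp only [Set.mem_setOf_eq] at hx ⊢
          rw [this, hx, mul_zero] } with hWdef
    have hWinv : ∀ i, ∀ x ∈ W, (A i).mulVec x ∈ W := by
      intro i x hx
      have hx0 : N0 x = 0 := hx
      have h1 := hkey i x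
      rw [hx0, mul_zero] at h1
      exact le_antisymm h1 (hN0nonneg _)
    intro x hx
    rcases hA W hWinv with hbot | htop
    · have : x ∈ W := hx
      rw [hbot] at this
      simpa using this
    · exfalso
      have : e ∈ W := htop ▸ Submodule.mem_top
      have he0 : N0 e = 0 := this
      rw [hN0e] at he0
      norm_num at he0
  have hN0 : IsNorm N0 := ⟨hN0nonneg, hN0def, hN0hom, hN0add⟩
  -- limits of rho along the subsequence
  have hrhoconv := rho_tendsto A hm hfnorm hN0 hconv
  have hPe : rhoSup A N0 = ρplus := by
    apply tendsto_nhds_unique hrhoconv.1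
    have : (fun k => rhoSup A (iterNnorm A γfun Ninit e (φ k)))
        = fun k => rhoSup A (iterN A γfun Ninit (φ k)) := funext fun k => hrs _
    rw [this]
    exact hplusφ
  have hMe : rhoInf A N0 = ρminus := by
    apply tendsto_nhds_unique hrhoconv.2
    have : (fun k => rhoInf A (iterNnorm A γfun Ninit e (φ k)))
        = fun k => rhoInf A (iterN A γfun Ninit (φ k)) := funext fun k => hri _
    rw [this]
    exact hminus.comp hφ.tendsto_atTop
  have hρm_pos : 0 < ρminus := hMe ▸ rhoInf_pos A hm hA hN0
  have hρmp : ρminus ≤ ρplus := by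
    rw [← hPe, ← hMe]
    exact rhoInf_le_rhoSup A hm1 hN0
  have hρp_pos : 0 < ρplus := lt_of_lt_of_le hρm_pos hρmp
  -- γ is positive
  have hγpos : 0 < γ := by
    rcases eq_or_ne ρminus ρplus with heq | hne
    · rw [hγ, heq, hγfun.2.1 ρplus hρp_pos]
      exact hρp_pos
    · have h1 := (hγfun.2.2 ρminus ρplus hρm_pos hρp_pos hne).1
      rw [hγ]
      have h2 : min ρminus ρplus = ρminus := min_eq_left hρmp
      rw [h2] at h1
      linarith
  -- γ_n → γ
  have hγcont : ContinuousAt (fun p : ℝ × ℝ => γfun p.1 p.2) (ρminus, ρplus) := by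
    have hopen : IsOpen {p : ℝ × ℝ | 0 < p.1 ∧ 0 < p.2} :=
      (isOpen_lt continuous_const continuous_fst).inter
        (isOpen_lt continuous_const continuous_snd)
    exact hγfun.1.continuousAt (hopen.mem_nhds ⟨hρm_pos, hρp_pos⟩)
  have hγn : Tendsto (fun n => γfun (rhoInf A (iterN A γfun Ninit n))
      (rhoSup A (iterN A γfun Ninit n))) atTop (𝓝 γ) := by
    rw [hγ]
    exact hγcont.tendsto.comp (hminus.prodMk_nhds hplus)
  -- Nseq are norms
  have hNseqEq : ∀ j, Nseq (j+1) = fun x => max (Nseq j x) (γ⁻¹ * maxA A (Nseq j) x) :=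
    fun j => funext (hNrec j)
  have hNseqNorm : ∀ j, IsNorm (Nseq j) := by
    intro j
    induction j with
    | zero => rw [hNseq0]; exact hN0
    | succ j ih => rw [hNseqEq j]; exact isNorm_max_relax A ih _
  -- part (a) by induction
  have hpartA : ∀ j, ∀ S : Set (Fin m → ℝ), IsBounded S →
      TendstoUniformlyOn
        (fun k x => iterN A γfun Ninit (φ k + j) x / iterN A γfun Ninit (φ k) e)
        (Nseq j) atTop S := by
    intro j
    induction j with
    | zero =>
      intro S hS
      rw [hNseq0]
      exact hconv S hS
    | succ j ih =>
      intro S hS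
      have hS' : IsBounded (⋃ i, (fun x => (A i).mulVec x) '' S) := by
        refine (isBounded_iUnion (ι := Fin r)).mpr fun i => ?_
        exact ((LinearMap.toContinuousLinearMap (A i).mulVecLin).lipschitz.isBounded_image hS)
      have hgpos : ∀ k x, 0 ≤ iterN A γfun Ninit (φ k + j) x / iterN A γfun Ninit (φ k) e :=
        fun k x => div_nonneg ((hNnorm _).1 x) (hce _).le
      have hmaxconv := tendstoUniformlyOn_maxA A hgpos (hNseqNorm j).1 (ih _ hS')
      -- bound for maxA (Nseq j) on S
      obtain ⟨b, hb, hbx⟩ := (isSeminorm_maxA A (hNseqNorm j).isSeminorm).le_const_norm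
      obtain ⟨R, hR⟩ := hS.subset_closedBall 0
      have hMbound : ∀ x ∈ S, |maxA A (Nseq j) x| ≤ b * |R| := by
        intro x hx
        rw [abs_of_nonneg (maxA_nonneg A (hNseqNorm j).1 x)]
        have hxR : ‖x‖ ≤ |R| := by
          have := hR hx
          rw [Metric.mem_closedBall, dist_zero_right] at this
          exact this.trans (le_abs_self R)
        exact (hbx x).trans (mul_le_mul_of_nonneg_left hxR hb)
      -- the inverse averaging factors converge
      have htendφj : Tendsto (fun k => φ k + j) atTop atTop :=
        tendsto_atTop_mono (fun k => Nat.le_add_right (φ k) j) hφ.tendsto_atTop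
      have hγinv : Tendsto (fun k => (γfun (rhoInf A (iterN A γfun Ninit (φ k + j)))
          (rhoSup A (iterN A γfun Ninit (φ k + j))))⁻¹) atTop (𝓝 γ⁻¹) :=
        (hγn.comp htendφj).inv₀ hγpos.ne'
      have hscalar := tendstoUniformlyOn_const_mul hγinv hMbound hmaxconv
      have hcombo := tendstoUniformlyOn_max (ih S hS) hscalar
      rw [hNseqEq j]
      apply hcombo.congr
      apply Filter.Eventually.of_forall
      intro k x hx
      show max _ _ = iterN A γfun Ninit (φ k + (j+1)) x / iterN A γfun Ninit (φ k) e
      have hc := hce (φ k)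
      rw [maxA_div A hc.le, ← mul_div_assoc, max_div_div_right hc.le]
      rfl
  -- part (b) from part (a)
  intro j
  refine ⟨hpartA j, ?_, ?_⟩
  · have hgnorm : ∀ k, IsNorm (fun x => iterN A γfun Ninit (φ k + j) x /
        iterN A γfun Ninit (φ k) e) := fun k => isNorm_div_const (hNnorm _) (hce _)
    have hconvg := (rho_tendsto A hm hgnorm (hNseqNorm j) (hpartA j)).1
    have heqρ : ∀ k, rhoSup A (fun x => iterN A γfun Ninit (φ k + j) x /
        iterN A γfun Ninit (φ k) e) = rhoSup A (iterN A γfun Ninit (φ k + j)) :=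
      fun k => (rho_div A (hce (φ k))).1
    have h2 : Tendsto (fun k => rhoSup A (iterN A γfun Ninit (φ k + j))) atTop (𝓝 ρplus) :=
      hplus.comp (tendsto_atTop_mono (fun k => Nat.le_add_right (φ k) j) hφ.tendsto_atTop)
    apply tendsto_nhds_unique hconvg
    have : (fun k => rhoSup A (fun x => iterN A γfun Ninit (φ k + j) x /
        iterN A γfun Ninit (φ k) e)) = fun k => rhoSup A (iterN A γfun Ninit (φ k + j)) :=
      funext heqρ
    rw [this]
    exact h2
  · have hgnorm : ∀ k, IsNorm (fun x => iterN A γfun Ninit (φ k + j) x /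
        iterN A γfun Ninit (φ k) e) := fun k => isNorm_div_const (hNnorm _) (hce _)
    have hconvg := (rho_tendsto A hm hgnorm (hNseqNorm j) (hpartA j)).2
    have heqρ : ∀ k, rhoInf A (fun x => iterN A γfun Ninit (φ k + j) x /
        iterN A γfun Ninit (φ k) e) = rhoInf A (iterN A γfun Ninit (φ k + j)) :=
      fun k => (rho_div A (hce (φ k))).2
    have h2 : Tendsto (fun k => rhoInf A (iterN A γfun Ninit (φ k + j))) atTop (𝓝 ρminus) :=
      hminus.comp (tendsto_atTop_mono (fun k => Nat.le_add_right (φ k) j) hφ.tendsto_atTop)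
    apply tendsto_nhds_unique hconvg
    have : (fun k => rhoInf A (fun x => iterN A γfun Ninit (φ k + j) x /
        iterN A γfun Ninit (φ k) e)) = fun k => rhoInf A (iterN A γfun Ninit (φ k + j)) :=
      funext heqρ
    rw [this]
    exact h2
end

section
/- Let A_1, …, A_r be real m×m matrices, let N be a norm on ℝ^m with min_{x≠0} (max_{1≤i≤r} N(A_i x))/N(x) = ρ⁻, let γ > ρ⁻, and define the norm N′ by N′(x) = max{N(x), γ^{-1} max_{1≤i≤r} N(A_i x)}. Assume that also min_{x≠0} (max_{1≤i≤r} N′(A_i x))/N′(x) = ρ⁻. Then every x ≠ 0 with max_{1≤i≤r} N′(A_i x) = ρ⁻·N′(x) satisfies max_{1≤i≤r} N(A_i x) = ρ⁻·N(x) and N(x) > γ^{-1} max_{1≤i≤r} N(A_i x); in particular N′(x) = N(x). -/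
open Matrix Filter Topology Bornology Pointwise

/-- if `min_{x≠0} (max_i N (A_i x))/N x = ρ⁻`, `γ > ρ⁻`,
`N' x = max (N x) (γ⁻¹ max_i N (A_i x))` and also `min_{x≠0} (max_i N' (A_i x))/N' x = ρ⁻`,
then every `x ≠ 0` with `max_i N' (A_i x) = ρ⁻ N' x` satisfies
`max_i N (A_i x) = ρ⁻ N x` and `N x > γ⁻¹ max_i N (A_i x)`; in particular `N' x = N x`. -/
theorem stmt13 {m r : ℕ} (hm : 1 ≤ m) (hr : 1 ≤ r)
    (A : Fin r → Matrix (Fin m) (Fin m) ℝ)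
    (N : (Fin m → ℝ) → ℝ) (hN : IsNorm N)
    (ρminus : ℝ) (hmin : rhoInf A N = ρminus)
    (γ : ℝ) (hγ : ρminus < γ)
    (N' : (Fin m → ℝ) → ℝ) (hN' : ∀ x, N' x = max (N x) (γ⁻¹ * maxA A N x))
    (hmin' : rhoInf A N' = ρminus) :
    ∀ x : Fin m → ℝ, x ≠ 0 → maxA A N' x = ρminus * N' x →
      maxA A N x = ρminus * N x ∧ γ⁻¹ * maxA A N x < N x ∧ N' x = N x := by
  -- basic facts
  have hrne : Nonempty (Fin r) := ⟨⟨0, hr⟩⟩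
  have hNpos : ∀ y : Fin m → ℝ, y ≠ 0 → 0 < N y := by
    intro y hy
    rcases (hN.1 y).lt_or_eq with h | h
    · exact h
    · exact absurd (hN.2.1 y h.symm) hy
  have hmaxA_nonneg : ∀ y : Fin m → ℝ, 0 ≤ maxA A N y := by
    intro y
    have : N ((A ⟨0, hr⟩).mulVec y) ≤ maxA A N y := by
      unfold maxA
      exact le_ciSup (f := fun i : Fin r => N ((A i).mulVec y))
        (Set.Finite.bddAbove (Set.finite_range _)) ⟨0, hr⟩
    exact le_trans (hN.1 _) this
  -- ρ⁻ ≥ 0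
  have hSne : ((fun x => maxA A N x / N x) '' {x | x ≠ 0}).Nonempty := by
    refine ⟨_, ⟨(fun _ => 1 : Fin m → ℝ), ?_, rfl⟩⟩
    intro h
    have := congrFun h ⟨0, hm⟩
    simp at this
  have hbdd : BddBelow ((fun x => maxA A N x / N x) '' {x | x ≠ 0}) := by
    refine ⟨0, ?_⟩
    rintro z ⟨y, hy, rfl⟩
    exact div_nonneg (hmaxA_nonneg y) (hN.1 y)
  have hρnn : 0 ≤ ρminus := by
    rw [← hmin]
    apply le_csInf hSne
    rintro z ⟨y, hy, rfl⟩
    exact div_nonneg (hmaxA_nonneg y) (hN.1 y)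
  have hγ0 : 0 < γ := lt_of_le_of_lt hρnn hγ
  -- main part
  intro x hx hmax
  have hNx : 0 < N x := hNpos x hx
  have hN'ge : N x ≤ N' x := (hN' x) ▸ le_max_left _ _
  have hN'pos : 0 < N' x := lt_of_lt_of_le hNx hN'ge
  -- maxA monotone in norm
  have hmono : maxA A N x ≤ maxA A N' x := by
    apply ciSup_mono (Set.Finite.bddAbove (Set.finite_range _))
    intro i
    exact (hN' _) ▸ le_max_left _ _
  -- rhoInf gives lower bound on maxA N x
  have hlow : ρminus * N x ≤ maxA A N x := by
    have h1 : ρminus ≤ maxA A N x / N x := by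
      rw [← hmin]
      exact csInf_le hbdd ⟨x, hx, rfl⟩
    exact (le_div_iff₀ hNx).mp h1
  -- strict inequality
  have hstrict : γ⁻¹ * maxA A N x < N x := by
    by_contra h
    push_neg at h
    have hNe : N' x = γ⁻¹ * maxA A N x := (hN' x).trans (max_eq_right h)
    have hmxN : maxA A N x = γ * N' x := by
      rw [hNe]; field_simp
    have : γ * N' x ≤ ρminus * N' x := by
      calc γ * N' x = maxA A N x := hmxN.symm
        _ ≤ maxA A N' x := hmono
        _ = ρminus * N' x := hmax
    have : γ ≤ ρminus := le_of_mul_le_mul_right (by linarith) hN'pos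
    linarith
  have hNeq : N' x = N x := (hN' x).trans (max_eq_left hstrict.le)
  refine ⟨?_, hstrict, hNeq⟩
  have hup : maxA A N x ≤ ρminus * N x := by
    calc maxA A N x ≤ maxA A N' x := hmono
      _ = ρminus * N' x := hmax
      _ = ρminus * N x := by rw [hNeq]
  linarith
end

section
/- Let A_1, …, A_r be real m×m matrices, let γ > 0, and let N_j (j = 0, 1, 2, …) be norms on ℝ^m satisfying N_{j+1}(x) = max{N_j(x), γ^{-1} max_{1≤i≤r} N_j(A_i x)} for all x. Suppose there exist a norm ‖·‖ on ℝ^m and a constant μ < ∞ such that N_j(x) ≤ μ·‖x‖ for all j and all x. Then the sequence N_j(x) is nondecreasing in j and converges for every x; the limit N(x) = lim_{j→∞} N_j(x) is a norm on ℝ^m; and N satisfies max_{1≤i≤r} N(A_i x) ≤ γ·N(x) for all x ∈ ℝ^m. -/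
open Matrix Filter Topology Bornology Pointwise

/-- if the norms `N_j` satisfy `N_{j+1} x = max (N_j x) (γ⁻¹ max_i N_j (A_i x))`
and are uniformly dominated by `μ·‖·‖` for some norm `‖·‖`, then `j ↦ N_j x` is nondecreasing
and converges for every `x`, the limit `N` is a norm, and `max_i N (A_i x) ≤ γ N x`. -/
theorem stmt15 {m r : ℕ} (hm : 1 ≤ m) (hr : 1 ≤ r)
    (A : Fin r → Matrix (Fin m) (Fin m) ℝ)
    (γ : ℝ) (hγ : 0 < γ)
    (Nseq : ℕ → (Fin m → ℝ) → ℝ) (hN : ∀ j, IsNorm (Nseq j))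
    (hrec : ∀ (j : ℕ) (x), Nseq (j + 1) x = max (Nseq j x) (γ⁻¹ * maxA A (Nseq j) x))
    (B : (Fin m → ℝ) → ℝ) (hB : IsNorm B) (μ : ℝ)
    (hub : ∀ (j : ℕ) (x), Nseq j x ≤ μ * B x) :
    (∀ x, Monotone fun j : ℕ => Nseq j x) ∧
      ∃ N : (Fin m → ℝ) → ℝ,
        (∀ x, Tendsto (fun j : ℕ => Nseq j x) atTop (𝓝 (N x))) ∧
          IsNorm N ∧ ∀ x, maxA A N x ≤ γ * N x := by
  haveI : Nonempty (Fin r) := ⟨⟨0, hr⟩⟩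
  have mono : ∀ x, Monotone fun j : ℕ => Nseq j x := by
    intro x
    apply monotone_nat_of_le_succ
    intro j
    rw [hrec j x]
    exact le_max_left _ _
  have bdd : ∀ x, BddAbove (Set.range fun j : ℕ => Nseq j x) := by
    intro x
    exact ⟨μ * B x, by rintro y ⟨j, rfl⟩; exact hub j x⟩
  set N : (Fin m → ℝ) → ℝ := fun x => ⨆ j : ℕ, Nseq j x with hNdef
  have htend : ∀ x, Tendsto (fun j : ℕ => Nseq j x) atTop (𝓝 (N x)) := fun x =>
    tendsto_atTop_ciSup (mono x) (bdd x)
  have hle : ∀ j x, Nseq j x ≤ N x := fun j x => le_ciSup (bdd x) j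
  refine ⟨mono, N, htend, ⟨?_, ?_, ?_, ?_⟩, ?_⟩
  · intro x
    exact le_trans ((hN 0).1 x) (hle 0 x)
  · intro x hx
    have h0 : Nseq 0 x = 0 :=
      le_antisymm (hx ▸ hle 0 x) ((hN 0).1 x)
    exact (hN 0).2.1 x h0
  · intro t x
    have h1 : Tendsto (fun j : ℕ => Nseq j (t • x)) atTop (𝓝 (N (t • x))) := htend _
    have h2 : Tendsto (fun j : ℕ => Nseq j (t • x)) atTop (𝓝 (|t| * N x)) := by
      have : (fun j : ℕ => Nseq j (t • x)) = fun j => |t| * Nseq j x := by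
        funext j; exact (hN j).2.2.1 t x
      rw [this]
      exact (htend x).const_mul _
    exact tendsto_nhds_unique h1 h2
  · intro x y
    refine le_of_tendsto_of_tendsto' (htend (x + y)) ((htend x).add (htend y)) ?_
    intro j
    exact (hN j).2.2.2 x y
  · intro x
    refine ciSup_le fun i => ?_
    refine le_of_tendsto (htend ((A i).mulVec x)) (Filter.Eventually.of_forall fun j => ?_)
    have h1 : Nseq j ((A i).mulVec x) ≤ maxA A (Nseq j) x := by
      unfold maxA
      exact le_ciSup (f := fun i => Nseq j ((A i).mulVec x)) (Set.Finite.bddAbove (Set.finite_range _)) i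
    have h2 : γ⁻¹ * maxA A (Nseq j) x ≤ Nseq (j + 1) x := by
      rw [hrec j x]; exact le_max_right _ _
    have h3 : maxA A (Nseq j) x ≤ γ * Nseq (j + 1) x := by
      have := mul_le_mul_of_nonneg_left h2 hγ.le
      rwa [← mul_assoc, mul_inv_cancel₀ hγ.ne', one_mul] at this
    calc Nseq j ((A i).mulVec x) ≤ γ * Nseq (j + 1) x := h1.trans h3
      _ ≤ γ * N x := mul_le_mul_of_nonneg_left (hle (j + 1) x) hγ.le
end

section
/- Let A_1, …, A_r be real m×m matrices, let γ > 0 and ρ⁺ > 0, and let N_j (j = 0, 1, 2, …) be norms on ℝ^m satisfying N_{j+1}(x) = max{N_j(x), γ^{-1} max_{1≤i≤r} N_j(A_i x)} for all x, such that there exist a norm ‖·‖ and μ < ∞ with N_j(x) ≤ μ·‖x‖ for all j and x, and such that max_{x≠0} (max_{1≤i≤r} N_j(A_i x))/N_j(x) = ρ⁺ for every j. Then ρ⁺ ≤ γ. -/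
open Matrix Filter Topology Bornology Pointwise

private lemma isNorm_zero {m : ℕ} {N : (Fin m → ℝ) → ℝ} (h : IsNorm N) : N 0 = 0 := by
  have := h.2.2.1 0 0
  simpa using this

private lemma isNorm_sum_le {m : ℕ} {ι : Type*} {N : (Fin m → ℝ) → ℝ} (h : IsNorm N)
    (s : Finset ι) (f : ι → Fin m → ℝ) : N (∑ i ∈ s, f i) ≤ ∑ i ∈ s, N (f i) := by
  classical
  induction s using Finset.cons_induction with
  | empty => simp [isNorm_zero h]
  | cons a s ha ih =>
      rw [Finset.sum_cons, Finset.sum_cons]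
      exact le_trans (h.2.2.2 _ _) (by linarith)

set_option maxHeartbeats 1000000 in
/-- if the norms `N_j` satisfy `N_{j+1} x = max (N_j x) (γ⁻¹ max_i N_j (A_i x))`,
are uniformly dominated by `μ·‖·‖`, and `max_{x≠0} (max_i N_j (A_i x))/N_j x = ρ⁺ > 0`
for every `j`, then `ρ⁺ ≤ γ`. -/
theorem stmt16 {m r : ℕ} (hm : 1 ≤ m) (hr : 1 ≤ r)
    (A : Fin r → Matrix (Fin m) (Fin m) ℝ)
    (γ ρplus : ℝ) (hγ : 0 < γ) (hρ : 0 < ρplus)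
    (Nseq : ℕ → (Fin m → ℝ) → ℝ) (hN : ∀ j, IsNorm (Nseq j))
    (hrec : ∀ (j : ℕ) (x), Nseq (j + 1) x = max (Nseq j x) (γ⁻¹ * maxA A (Nseq j) x))
    (B : (Fin m → ℝ) → ℝ) (hB : IsNorm B) (μ : ℝ)
    (hub : ∀ (j : ℕ) (x), Nseq j x ≤ μ * B x)
    (hsup : ∀ j : ℕ, rhoSup A (Nseq j) = ρplus) :
    ρplus ≤ γ := by
  classical
  by_contra hcon
  push_neg at hcon
  -- hcon : γ < ρplus
  have hmpos : 0 < m := hm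
  have hrpos : 0 < r := hr
  haveI : Nonempty (Fin m) := Fin.pos_iff_nonempty.mp hmpos
  haveI : Nonempty (Fin r) := Fin.pos_iff_nonempty.mp hrpos
  set ε : ℝ := (ρplus - γ) / 2 with hεdef
  have hεpos : 0 < ε := by simp only [hεdef]; linarith
  have hρεpos : 0 < ρplus - ε := by simp only [hεdef]; linarith
  have hN0 : ∀ j x, 0 ≤ Nseq j x := fun j => (hN j).1
  have hNpos : ∀ j (x : Fin m → ℝ), x ≠ 0 → 0 < Nseq j x := by
    intro j x hx
    rcases lt_or_eq_of_le (hN0 j x) with h | h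
    · exact h
    · exact absurd ((hN j).2.1 x h.symm) hx
  -- monotone and bounded
  have hmono : ∀ x : Fin m → ℝ, Monotone fun j => Nseq j x := by
    intro x
    apply monotone_nat_of_le_succ
    intro j
    rw [hrec j x]
    exact le_max_left _ _
  have hbddN : ∀ x : Fin m → ℝ, BddAbove (Set.range fun j => Nseq j x) := by
    intro x
    refine ⟨μ * B x, ?_⟩
    rintro _ ⟨j, rfl⟩
    exact hub j x
  set L : (Fin m → ℝ) → ℝ := fun x => ⨆ j, Nseq j x with hLdef
  have hNL : ∀ j (x : Fin m → ℝ), Nseq j x ≤ L x := fun j x => le_ciSup (hbddN x) j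
  have hLt : ∀ x : Fin m → ℝ, Tendsto (fun j => Nseq j x) atTop (𝓝 (L x)) :=
    fun x => tendsto_atTop_ciSup (hmono x) (hbddN x)
  have hLpos : ∀ x : Fin m → ℝ, x ≠ 0 → 0 < L x :=
    fun x hx => lt_of_lt_of_le (hNpos 0 x hx) (hNL 0 x)
  have hbddA : ∀ j (x : Fin m → ℝ),
      BddAbove (Set.range fun i : Fin r => Nseq j ((A i).mulVec x)) :=
    fun j x => (Set.finite_range _).bddAbove
  -- key: N_j (A_i x) ≤ γ * N_{j+1} x, hence L (A_i x) ≤ γ * L x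
  have hkey : ∀ (j : ℕ) (i : Fin r) (x : Fin m → ℝ),
      Nseq j ((A i).mulVec x) ≤ γ * Nseq (j + 1) x := by
    intro j i x
    have h1 : Nseq j ((A i).mulVec x) ≤ maxA A (Nseq j) x := le_ciSup (hbddA j x) i
    have h2 : γ⁻¹ * maxA A (Nseq j) x ≤ Nseq (j + 1) x := by
      rw [hrec j x]; exact le_max_right _ _
    have h3 : γ⁻¹ * Nseq j ((A i).mulVec x) ≤ Nseq (j + 1) x :=
      le_trans (by nlinarith [inv_pos.mpr hγ]) h2
    calc Nseq j ((A i).mulVec x) = γ * (γ⁻¹ * Nseq j ((A i).mulVec x)) := by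
          field_simp
      _ ≤ γ * Nseq (j + 1) x := by nlinarith
  have hLA : ∀ (i : Fin r) (x : Fin m → ℝ), L ((A i).mulVec x) ≤ γ * L x := by
    intro i x
    apply ciSup_le
    intro j
    exact le_trans (hkey j i x) (by nlinarith [hNL (j + 1) x])
  -- uniform bound N_j x ≤ K * ‖x‖ with K > 0
  set Cb : ℝ := ∑ i : Fin m, B (Pi.single i 1) with hCbdef
  have hCbB : ∀ x : Fin m → ℝ, B x ≤ Cb * ‖x‖ := by
    intro x
    have hx : x = ∑ i : Fin m, (x i) • (Pi.single i (1 : ℝ) : Fin m → ℝ) := by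
      funext j
      simp [Pi.single_apply]
    calc B x = B (∑ i : Fin m, (x i) • (Pi.single i (1 : ℝ) : Fin m → ℝ)) := by rw [← hx]
      _ ≤ ∑ i : Fin m, B ((x i) • (Pi.single i (1 : ℝ) : Fin m → ℝ)) := isNorm_sum_le hB _ _
      _ = ∑ i : Fin m, |x i| * B (Pi.single i (1 : ℝ)) := by
          refine Finset.sum_congr rfl fun i _ => ?_
          exact hB.2.2.1 (x i) _
      _ ≤ ∑ i : Fin m, ‖x‖ * B (Pi.single i (1 : ℝ)) := by
          refine Finset.sum_le_sum fun i _ => ?_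
          have h1 : |x i| ≤ ‖x‖ := by
            have := norm_le_pi_norm x i
            simpa [Real.norm_eq_abs] using this
          exact mul_le_mul_of_nonneg_right h1 (hB.1 _)
      _ = Cb * ‖x‖ := by
          rw [hCbdef, Finset.sum_mul]
          exact Finset.sum_congr rfl fun i _ => mul_comm _ _
  have hμpos : 0 < μ := by
    have hx1 : (fun _ : Fin m => (1 : ℝ)) ≠ 0 := by
      intro h
      have := congrFun h ⟨0, hmpos⟩
      norm_num at this
    have h1 := hNpos 0 _ hx1
    have h2 := hub 0 (fun _ : Fin m => (1 : ℝ))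
    have hB1 : 0 < B (fun _ : Fin m => (1 : ℝ)) := by
      rcases lt_or_eq_of_le (hB.1 _) with h | h
      · exact h
      · exact absurd (hB.2.1 _ h.symm) hx1
    nlinarith
  set K : ℝ := μ * Cb + 1 with hKdef
  have hK : ∀ (j : ℕ) (x : Fin m → ℝ), Nseq j x ≤ K * ‖x‖ := by
    intro j x
    have h1 := hub j x
    have h2 := hCbB x
    have h3 : μ * B x ≤ μ * (Cb * ‖x‖) := by nlinarith
    have h4 : (μ * Cb) * ‖x‖ ≤ K * ‖x‖ := by
      have := norm_nonneg x
      nlinarith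
    nlinarith
  -- Lipschitz-type estimate
  have hLip : ∀ (j : ℕ) (x y : Fin m → ℝ), Nseq j x ≤ Nseq j y + K * ‖x - y‖ := by
    intro j x y
    have h1 : Nseq j x ≤ Nseq j y + Nseq j (x - y) := by
      have := (hN j).2.2.2 y (x - y)
      simpa using this
    exact le_trans h1 (by nlinarith [hK j (x - y)])
  -- operator norm bound
  set C : ℝ := ⨆ i : Fin r, matNorm (A i) with hCdef
  have hC : ∀ (i : Fin r) (w : Fin m → ℝ), ‖(A i).mulVec w‖ ≤ C * ‖w‖ := by
    intro i w
    have h1 : ‖(A i).mulVec w‖ ≤ matNorm (A i) * ‖w‖ := by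
      have := ContinuousLinearMap.le_opNorm (LinearMap.toContinuousLinearMap (A i).mulVecLin) w
      simpa [matNorm, Matrix.mulVecLin_apply] using this
    have h2 : matNorm (A i) ≤ C :=
      le_ciSup (f := fun i : Fin r => matNorm (A i)) ((Set.finite_range _).bddAbove) i
    exact le_trans h1 (mul_le_mul_of_nonneg_right h2 (norm_nonneg w))
  -- select near-maximizers on the unit sphere
  have hsel : ∀ j : ℕ, ∃ u : Fin m → ℝ, ‖u‖ = 1 ∧
      (ρplus - ε) * Nseq j u < maxA A (Nseq j) u := by
    intro j
    have hne : ((fun x => maxA A (Nseq j) x / Nseq j x) '' {x | x ≠ 0}).Nonempty := by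
      refine ⟨_, ⟨(fun _ : Fin m => (1 : ℝ)), ?_, rfl⟩⟩
      intro h
      have := congrFun h ⟨0, hmpos⟩
      norm_num at this
    have hlt : ρplus - ε < sSup ((fun x => maxA A (Nseq j) x / Nseq j x) '' {x | x ≠ 0}) := by
      have := hsup j
      rw [rhoSup] at this
      rw [this]
      linarith
    obtain ⟨v, ⟨x, hxne, rfl⟩, hv⟩ := exists_lt_of_lt_csSup hne hlt
    have hNx : 0 < Nseq j x := hNpos j x hxne
    have hxlt : (ρplus - ε) * Nseq j x < maxA A (Nseq j) x := by
      rw [lt_div_iff₀ hNx] at hv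
      linarith
    set t : ℝ := ‖x‖⁻¹ with htdef
    have hxnorm : 0 < ‖x‖ := norm_pos_iff.mpr hxne
    have ht : 0 < t := inv_pos.mpr hxnorm
    refine ⟨t • x, ?_, ?_⟩
    · rw [norm_smul, Real.norm_eq_abs, abs_of_pos ht, htdef]
      exact inv_mul_cancel₀ (ne_of_gt hxnorm)
    · have hNsmul : Nseq j (t • x) = t * Nseq j x := by
        rw [(hN j).2.2.1 t x, abs_of_pos ht]
      have hMsmul : maxA A (Nseq j) (t • x) = t * maxA A (Nseq j) x := by
        rw [maxA, maxA, Real.mul_iSup_of_nonneg ht.le]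
        refine iSup_congr fun i => ?_
        rw [Matrix.mulVec_smul, (hN j).2.2.1 t _, abs_of_pos ht]
      rw [hNsmul, hMsmul]
      nlinarith
  choose u hu1 hu2 using hsel
  -- compactness: extract a convergent subsequence
  have husphere : ∀ j, u j ∈ Metric.sphere (0 : Fin m → ℝ) 1 :=
    fun j => mem_sphere_zero_iff_norm.mpr (hu1 j)
  obtain ⟨xs, hxsmem, φ, hφ, hconv⟩ :=
    (isCompact_sphere (0 : Fin m → ℝ) 1).tendsto_subseq husphere
  have hxsnorm : ‖xs‖ = 1 := mem_sphere_zero_iff_norm.mp hxsmem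
  have hxsne : xs ≠ 0 := by
    intro h
    rw [h, norm_zero] at hxsnorm
    norm_num at hxsnorm
  set d : ℕ → ℝ := fun k => ‖u (φ k) - xs‖ with hddef
  have hd0 : Tendsto d atTop (𝓝 0) := by
    have h1 : Tendsto (fun k => u (φ k) - xs) atTop (𝓝 (xs - xs)) :=
      hconv.sub tendsto_const_nhds
    rw [sub_self] at h1
    have h2 := h1.norm
    rw [norm_zero] at h2
    exact h2
  -- the key chain of inequalities
  have hchain : ∀ k : ℕ,
      (ρplus - ε) * (Nseq (φ k) xs - K * d k) ≤ γ * L xs + (K * C) * d k := by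
    intro k
    have hlow : Nseq (φ k) xs - K * d k ≤ Nseq (φ k) (u (φ k)) := by
      have := hLip (φ k) xs (u (φ k))
      have hrev : ‖xs - u (φ k)‖ = d k := by rw [hddef]; exact norm_sub_rev _ _
      rw [hrev] at this
      linarith
    have hup : maxA A (Nseq (φ k)) (u (φ k)) ≤ γ * L xs + (K * C) * d k := by
      apply ciSup_le
      intro i
      have h1 : Nseq (φ k) ((A i).mulVec (u (φ k))) ≤
          Nseq (φ k) ((A i).mulVec xs) + K * ‖(A i).mulVec (u (φ k)) - (A i).mulVec xs‖ :=
        hLip _ _ _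
      have h2 : (A i).mulVec (u (φ k)) - (A i).mulVec xs = (A i).mulVec (u (φ k) - xs) := by
        rw [Matrix.mulVec_sub]
      have h3 : ‖(A i).mulVec (u (φ k) - xs)‖ ≤ C * d k := hC i _
      have h4 : Nseq (φ k) ((A i).mulVec xs) ≤ γ * L xs :=
        le_trans (hNL _ _) (hLA i xs)
      have hKpos : 0 < K := by
        have hCb0 : 0 ≤ Cb := Finset.sum_nonneg fun i _ => hB.1 _
        rw [hKdef]; nlinarith
      rw [h2] at h1
      have h5 : K * ‖(A i).mulVec (u (φ k) - xs)‖ ≤ K * (C * d k) :=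
        mul_le_mul_of_nonneg_left h3 hKpos.le
      have h6 : K * (C * d k) = (K * C) * d k := (mul_assoc K C (d k)).symm
      linarith
    have hmid : (ρplus - ε) * Nseq (φ k) (u (φ k)) < maxA A (Nseq (φ k)) (u (φ k)) :=
      hu2 (φ k)
    have hlow2 : (ρplus - ε) * (Nseq (φ k) xs - K * d k) ≤
        (ρplus - ε) * Nseq (φ k) (u (φ k)) :=
      mul_le_mul_of_nonneg_left hlow hρεpos.le
    linarith
  -- pass to the limit
  have hlhs : Tendsto (fun k => (ρplus - ε) * (Nseq (φ k) xs - K * d k)) atTop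
      (𝓝 ((ρplus - ε) * (L xs - K * 0))) := by
    apply Tendsto.const_mul
    exact ((hLt xs).comp hφ.tendsto_atTop).sub (hd0.const_mul K)
  have hrhs : Tendsto (fun k => γ * L xs + (K * C) * d k) atTop
      (𝓝 (γ * L xs + (K * C) * 0)) :=
    tendsto_const_nhds.add (hd0.const_mul (K * C))
  have hfin : (ρplus - ε) * (L xs - K * 0) ≤ γ * L xs + (K * C) * 0 :=
    le_of_tendsto_of_tendsto' hlhs hrhs hchain
  have hLxs : 0 < L xs := hLpos xs hxsne
  rw [mul_zero, mul_zero, sub_zero, add_zero] at hfin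
  have : ρplus - ε ≤ γ := by
    by_contra h
    push_neg at h
    nlinarith
  simp only [hεdef] at this
  linarith
end

section
/- If 𝒜 = {A_1, …, A_r} is an irreducible finite set of real m×m matrices, then there exists an extremal norm for 𝒜, i.e. a norm ‖·‖ on ℝ^m such that ‖A_i x‖ ≤ ρ(𝒜)·‖x‖ for all 1 ≤ i ≤ r and all x ∈ ℝ^m; equivalently, the infimum in ρ(𝒜) = inf_{‖·‖} max_{1≤i≤r} ‖A_i‖ (infimum over all norms on ℝ^m, with ‖A_i‖ the induced operator norm) is attained. -/
open Matrix Filter Topology Bornology Pointwise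

/-! ### Auxiliary development for `stmt18` -/

section AuxJSR

variable {m r : ℕ}

lemma matNorm_nonneg (M : Matrix (Fin m) (Fin m) ℝ) : 0 ≤ matNorm M :=
  norm_nonneg _

lemma norm_mulVec_le (M : Matrix (Fin m) (Fin m) ℝ) (x : Fin m → ℝ) :
    ‖M.mulVec x‖ ≤ matNorm M * ‖x‖ := by
  have h := (LinearMap.toContinuousLinearMap M.mulVecLin).le_opNorm x
  simpa [matNorm, LinearMap.coe_toContinuousLinearMap', Matrix.mulVecLin_apply] using h

lemma matNorm_le_bound {M : Matrix (Fin m) (Fin m) ℝ} {c : ℝ} (hc : 0 ≤ c)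
    (h : ∀ x, ‖M.mulVec x‖ ≤ c * ‖x‖) : matNorm M ≤ c := by
  apply ContinuousLinearMap.opNorm_le_bound _ hc
  intro x
  simpa [LinearMap.coe_toContinuousLinearMap', Matrix.mulVecLin_apply] using h x

lemma matNorm_mul_le (M N : Matrix (Fin m) (Fin m) ℝ) :
    matNorm (M * N) ≤ matNorm M * matNorm N := by
  apply matNorm_le_bound (mul_nonneg (matNorm_nonneg M) (matNorm_nonneg N))
  intro x
  rw [← Matrix.mulVec_mulVec]
  calc ‖M.mulVec (N.mulVec x)‖ ≤ matNorm M * ‖N.mulVec x‖ := norm_mulVec_le _ _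
    _ ≤ matNorm M * (matNorm N * ‖x‖) :=
      mul_le_mul_of_nonneg_left (norm_mulVec_le _ _) (matNorm_nonneg M)
    _ = matNorm M * matNorm N * ‖x‖ := by ring

lemma matNorm_one_le : matNorm (1 : Matrix (Fin m) (Fin m) ℝ) ≤ 1 := by
  apply matNorm_le_bound zero_le_one
  intro x
  rw [Matrix.one_mulVec, one_mul]

/-- The product of the matrices along a word. -/
noncomputable def wordProd (A : Fin r → Matrix (Fin m) (Fin m) ℝ) {n : ℕ}
    (w : Fin n → Fin r) : Matrix (Fin m) (Fin m) ℝ :=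
  (List.ofFn fun k => A (w k)).prod

variable {A : Fin r → Matrix (Fin m) (Fin m) ℝ}

lemma wordProd_zero (w : Fin 0 → Fin r) : wordProd A w = 1 := by
  simp [wordProd]

lemma wordProd_succ {n : ℕ} (w : Fin (n + 1) → Fin r) :
    wordProd A w = A (w 0) * wordProd A (w ∘ Fin.succ) := by
  rw [wordProd, List.ofFn_succ, List.prod_cons]
  rfl

lemma wordProd_snoc {n : ℕ} (w : Fin n → Fin r) (i : Fin r) :
    wordProd A (Fin.snoc w i) = wordProd A w * A i := by
  rw [wordProd, List.ofFn_succ']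
  simp only [Fin.snoc_castSucc, Fin.snoc_last, List.concat_eq_append, List.prod_append,
    List.prod_cons, List.prod_nil, mul_one]
  rfl

/-- The maximal norm over products of words of length `n`. -/
noncomputable def seqA (A : Fin r → Matrix (Fin m) (Fin m) ℝ) (n : ℕ) : ℝ :=
  ⨆ w : Fin n → Fin r, matNorm (wordProd A w)

lemma jsr_eq : jsr A = Filter.atTop.limsup fun n : ℕ => seqA A n ^ (1 / (n : ℝ)) := rfl

lemma matNorm_wordProd_le_seqA {n : ℕ} (w : Fin n → Fin r) :
    matNorm (wordProd A w) ≤ seqA A n :=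
  le_ciSup (f := fun w : Fin n → Fin r => matNorm (wordProd A w))
    (Set.Finite.bddAbove (Set.finite_range _)) w

lemma seqA_nonneg (hr : 1 ≤ r) (n : ℕ) : 0 ≤ seqA A n := by
  have hw : Fin n → Fin r := fun _ => ⟨0, hr⟩
  exact (matNorm_nonneg _).trans (matNorm_wordProd_le_seqA hw)

lemma seqA_le (hr : 1 ≤ r) {n : ℕ} {c : ℝ}
    (h : ∀ w : Fin n → Fin r, matNorm (wordProd A w) ≤ c) : seqA A n ≤ c := by
  have : Nonempty (Fin n → Fin r) := ⟨fun _ => ⟨0, hr⟩⟩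
  exact ciSup_le h

/-- A convenient uniform bound on the matrices of the family. -/
noncomputable def boundK (A : Fin r → Matrix (Fin m) (Fin m) ℝ) : ℝ :=
  max 1 (⨆ i, matNorm (A i))

lemma one_le_boundK : 1 ≤ boundK A := le_max_left _ _

lemma boundK_nonneg : (0 : ℝ) ≤ boundK A := zero_le_one.trans one_le_boundK

lemma matNorm_le_boundK (i : Fin r) : matNorm (A i) ≤ boundK A :=
  (le_ciSup (f := fun i => matNorm (A i)) (Set.Finite.bddAbove (Set.finite_range _)) i).trans
    (le_max_right _ _)

lemma matNorm_wordProd_le_pow : ∀ {n : ℕ} (w : Fin n → Fin r),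
    matNorm (wordProd A w) ≤ boundK A ^ n := by
  intro n
  induction n with
  | zero => intro w; rw [wordProd_zero, pow_zero]; exact matNorm_one_le
  | succ n ih =>
    intro w
    rw [wordProd_succ, pow_succ, mul_comm (boundK A ^ n) (boundK A)]
    calc matNorm (A (w 0) * wordProd A (w ∘ Fin.succ))
        ≤ matNorm (A (w 0)) * matNorm (wordProd A (w ∘ Fin.succ)) := matNorm_mul_le _ _
      _ ≤ boundK A * boundK A ^ n :=
        mul_le_mul (matNorm_le_boundK _) (ih _) (matNorm_nonneg _) boundK_nonneg

lemma seqA_le_pow (hr : 1 ≤ r) (n : ℕ) : seqA A n ≤ boundK A ^ n :=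
  seqA_le hr fun w => matNorm_wordProd_le_pow w

lemma rpow_seqA_le (hr : 1 ≤ r) (n : ℕ) : seqA A n ^ (1 / (n : ℝ)) ≤ boundK A := by
  rcases Nat.eq_zero_or_pos n with h0 | hn
  · subst h0
    simp only [Nat.cast_zero, div_zero, Real.rpow_zero]
    exact one_le_boundK
  · have hn' : (n : ℝ) ≠ 0 := Nat.cast_ne_zero.mpr hn.ne'
    calc seqA A n ^ (1 / (n : ℝ)) ≤ (boundK A ^ n) ^ (1 / (n : ℝ)) :=
          Real.rpow_le_rpow (seqA_nonneg hr n) (seqA_le_pow hr n)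
            (by positivity)
      _ = boundK A := by
          rw [← Real.rpow_natCast (boundK A) n, ← Real.rpow_mul boundK_nonneg,
            mul_one_div, div_self hn', Real.rpow_one]

lemma jsr_isBoundedUnder (hr : 1 ≤ r) :
    IsBoundedUnder (· ≤ ·) Filter.atTop (fun n : ℕ => seqA A n ^ (1 / (n : ℝ))) :=
  isBoundedUnder_of_eventually_le (a := boundK A)
    (Filter.Eventually.of_forall fun n => rpow_seqA_le hr n)

lemma jsr_nonneg (hr : 1 ≤ r) : 0 ≤ jsr A := by
  rw [jsr_eq]
  apply le_limsup_of_frequently_le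
  · exact Filter.Frequently.of_forall fun n => Real.rpow_nonneg (seqA_nonneg hr n) _
  · exact jsr_isBoundedUnder hr

lemma eventually_seqA_le (hr : 1 ≤ r) {ε : ℝ} (hε : 0 < ε) :
    ∀ᶠ n in Filter.atTop, seqA A n ≤ (jsr A + ε) ^ n := by
  have hlt : Filter.atTop.limsup (fun n : ℕ => seqA A n ^ (1 / (n : ℝ))) < jsr A + ε := by
    rw [← jsr_eq]; exact lt_add_of_pos_right _ hε
  have hev := eventually_lt_of_limsup_lt hlt (jsr_isBoundedUnder hr)
  filter_upwards [hev, Filter.eventually_ge_atTop 1] with n hn h1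
  have hn' : (n : ℝ) ≠ 0 := Nat.cast_ne_zero.mpr (by omega)
  have key : (seqA A n ^ (1 / (n : ℝ))) ^ n ≤ (jsr A + ε) ^ n :=
    pow_le_pow_left₀ (Real.rpow_nonneg (seqA_nonneg hr n) _) hn.le n
  calc seqA A n = (seqA A n ^ (1 / (n : ℝ))) ^ n := by
        rw [← Real.rpow_natCast (seqA A n ^ (1 / (n : ℝ))) n,
          ← Real.rpow_mul (seqA_nonneg hr n), one_div_mul_cancel hn', Real.rpow_one]
    _ ≤ (jsr A + ε) ^ n := key

lemma exists_C (hr : 1 ≤ r) {ε : ℝ} (hε : 0 < ε) :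
    ∃ C : ℝ, 1 ≤ C ∧ ∀ n, seqA A n ≤ C * (jsr A + ε) ^ n := by
  have hρε : 0 < jsr A + ε := add_pos_of_nonneg_of_pos (jsr_nonneg hr) hε
  obtain ⟨n₀, hn₀⟩ := Filter.eventually_atTop.mp (eventually_seqA_le hr hε)
  refine ⟨1 + ∑ k ∈ Finset.range n₀, seqA A k * ((jsr A + ε) ^ k)⁻¹, ?_, ?_⟩
  · have : 0 ≤ ∑ k ∈ Finset.range n₀, seqA A k * ((jsr A + ε) ^ k)⁻¹ :=
      Finset.sum_nonneg fun k _ => mul_nonneg (seqA_nonneg hr k) (by positivity)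
    linarith
  · intro n
    rcases lt_or_ge n n₀ with h | h
    · have hterm : seqA A n * ((jsr A + ε) ^ n)⁻¹ ≤
          ∑ k ∈ Finset.range n₀, seqA A k * ((jsr A + ε) ^ k)⁻¹ :=
        Finset.single_le_sum (f := fun k => seqA A k * ((jsr A + ε) ^ k)⁻¹)
          (fun k _ => mul_nonneg (seqA_nonneg hr k) (by positivity))
          (Finset.mem_range.mpr h)
      have hpow : (0 : ℝ) < (jsr A + ε) ^ n := by positivity
      calc seqA A n = seqA A n * ((jsr A + ε) ^ n)⁻¹ * (jsr A + ε) ^ n := by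
            field_simp
        _ ≤ (1 + ∑ k ∈ Finset.range n₀, seqA A k * ((jsr A + ε) ^ k)⁻¹) * (jsr A + ε) ^ n := by
            apply mul_le_mul_of_nonneg_right _ hpow.le
            linarith
    · calc seqA A n ≤ (jsr A + ε) ^ n := hn₀ n h
        _ ≤ (1 + ∑ k ∈ Finset.range n₀, seqA A k * ((jsr A + ε) ^ k)⁻¹) * (jsr A + ε) ^ n := by
            apply le_mul_of_one_le_left (by positivity)
            have : 0 ≤ ∑ k ∈ Finset.range n₀, seqA A k * ((jsr A + ε) ^ k)⁻¹ :=
              Finset.sum_nonneg fun k _ => mul_nonneg (seqA_nonneg hr k) (by positivity)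
            linarith

end AuxJSR

section AuxBigN

variable {m r : ℕ}

/-- The index type for the sup defining `bigN`: words of arbitrary length. -/
abbrev WordIdx (r : ℕ) := Σ n : ℕ, Fin n → Fin r

instance : Nonempty (WordIdx r) := ⟨⟨0, fun k => k.elim0⟩⟩

/-- The scaled trajectory norm `sup_{n,w} (ρ+ε)^{-n} ‖P_w x‖`. -/
noncomputable def bigN (A : Fin r → Matrix (Fin m) (Fin m) ℝ) (ε : ℝ)
    (x : Fin m → ℝ) : ℝ :=
  ⨆ p : WordIdx r, ((jsr A + ε) ^ p.1)⁻¹ * ‖(wordProd A p.2).mulVec x‖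

variable {A : Fin r → Matrix (Fin m) (Fin m) ℝ} {ε C : ℝ}

lemma bigN_term_le (hr : 1 ≤ r) (hε : 0 < ε) (hC : ∀ n, seqA A n ≤ C * (jsr A + ε) ^ n)
    (x : Fin m → ℝ) (p : WordIdx r) :
    ((jsr A + ε) ^ p.1)⁻¹ * ‖(wordProd A p.2).mulVec x‖ ≤ C * ‖x‖ := by
  have hρε : 0 < jsr A + ε := add_pos_of_nonneg_of_pos (jsr_nonneg hr) hε
  have hp : (0:ℝ) < (jsr A + ε) ^ p.1 := by positivity
  calc ((jsr A + ε) ^ p.1)⁻¹ * ‖(wordProd A p.2).mulVec x‖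
      ≤ ((jsr A + ε) ^ p.1)⁻¹ * (matNorm (wordProd A p.2) * ‖x‖) :=
        mul_le_mul_of_nonneg_left (norm_mulVec_le _ _) (by positivity)
    _ ≤ ((jsr A + ε) ^ p.1)⁻¹ * (C * (jsr A + ε) ^ p.1 * ‖x‖) := by
        apply mul_le_mul_of_nonneg_left _ (by positivity)
        exact mul_le_mul_of_nonneg_right
          ((matNorm_wordProd_le_seqA _).trans (hC p.1)) (norm_nonneg x)
    _ = C * ‖x‖ := by field_simp
  
lemma bigN_bddAbove (hr : 1 ≤ r) (hε : 0 < ε) (hC : ∀ n, seqA A n ≤ C * (jsr A + ε) ^ n)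
    (x : Fin m → ℝ) :
    BddAbove (Set.range fun p : WordIdx r =>
      ((jsr A + ε) ^ p.1)⁻¹ * ‖(wordProd A p.2).mulVec x‖) := by
  refine ⟨C * ‖x‖, ?_⟩
  rintro b ⟨p, rfl⟩
  exact bigN_term_le hr hε hC x p

lemma bigN_le (hr : 1 ≤ r) (hε : 0 < ε) (hC : ∀ n, seqA A n ≤ C * (jsr A + ε) ^ n)
    (x : Fin m → ℝ) : bigN A ε x ≤ C * ‖x‖ :=
  ciSup_le (bigN_term_le hr hε hC x)

lemma norm_le_bigN (hr : 1 ≤ r) (hε : 0 < ε) (hC : ∀ n, seqA A n ≤ C * (jsr A + ε) ^ n)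
    (x : Fin m → ℝ) : ‖x‖ ≤ bigN A ε x := by
  have h := le_ciSup (f := fun p : WordIdx r =>
      ((jsr A + ε) ^ p.1)⁻¹ * ‖(wordProd A p.2).mulVec x‖)
    (bigN_bddAbove hr hε hC x) (⟨0, fun k => k.elim0⟩ : WordIdx r)
  simpa [bigN, wordProd_zero, Matrix.one_mulVec] using h

lemma bigN_nonneg (hr : 1 ≤ r) (hε : 0 < ε) (hC : ∀ n, seqA A n ≤ C * (jsr A + ε) ^ n)
    (x : Fin m → ℝ) : 0 ≤ bigN A ε x :=
  (norm_nonneg x).trans (norm_le_bigN hr hε hC x)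

lemma bigN_smul (t : ℝ) (x : Fin m → ℝ) : bigN A ε (t • x) = |t| * bigN A ε x := by
  rw [bigN, bigN, Real.mul_iSup_of_nonneg (abs_nonneg t)]
  congr 1
  ext p
  rw [Matrix.mulVec_smul, norm_smul, Real.norm_eq_abs]
  ring

lemma bigN_add (hr : 1 ≤ r) (hε : 0 < ε) (hC : ∀ n, seqA A n ≤ C * (jsr A + ε) ^ n)
    (x y : Fin m → ℝ) : bigN A ε (x + y) ≤ bigN A ε x + bigN A ε y := by
  apply ciSup_le
  intro p
  calc ((jsr A + ε) ^ p.1)⁻¹ * ‖(wordProd A p.2).mulVec (x + y)‖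
      ≤ ((jsr A + ε) ^ p.1)⁻¹ * (‖(wordProd A p.2).mulVec x‖ + ‖(wordProd A p.2).mulVec y‖) := by
        have hρε : 0 < jsr A + ε := add_pos_of_nonneg_of_pos (jsr_nonneg hr) hε
        apply mul_le_mul_of_nonneg_left _ (by positivity)
        rw [Matrix.mulVec_add]
        exact norm_add_le _ _
    _ = ((jsr A + ε) ^ p.1)⁻¹ * ‖(wordProd A p.2).mulVec x‖ +
        ((jsr A + ε) ^ p.1)⁻¹ * ‖(wordProd A p.2).mulVec y‖ := by ring
    _ ≤ bigN A ε x + bigN A ε y := by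
        apply add_le_add
        · exact le_ciSup (bigN_bddAbove hr hε hC x) p
        · exact le_ciSup (bigN_bddAbove hr hε hC y) p

lemma bigN_mulVec_le (hr : 1 ≤ r) (hε : 0 < ε) (hC : ∀ n, seqA A n ≤ C * (jsr A + ε) ^ n)
    (i : Fin r) (x : Fin m → ℝ) :
    bigN A ε ((A i).mulVec x) ≤ (jsr A + ε) * bigN A ε x := by
  have hρε : 0 < jsr A + ε := add_pos_of_nonneg_of_pos (jsr_nonneg hr) hε
  apply ciSup_le
  rintro ⟨n, w⟩
  have key : ((jsr A + ε) ^ n)⁻¹ * ‖(wordProd A w).mulVec ((A i).mulVec x)‖ =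
      (jsr A + ε) * (((jsr A + ε) ^ (n + 1))⁻¹ *
        ‖(wordProd A (Fin.snoc w i : Fin (n+1) → Fin r)).mulVec x‖) := by
    rw [Matrix.mulVec_mulVec, ← wordProd_snoc]
    rw [pow_succ]
    field_simp
  rw [key]
  apply mul_le_mul_of_nonneg_left _ hρε.le
  exact le_ciSup (f := fun p : WordIdx r =>
      ((jsr A + ε) ^ p.1)⁻¹ * ‖(wordProd A p.2).mulVec x‖)
    (bigN_bddAbove hr hε hC x) (⟨n + 1, Fin.snoc w i⟩ : WordIdx r)

end AuxBigN

section AuxFF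

variable {m r : ℕ}

/-- Sup of `bigN` over the unit sphere. -/
noncomputable def Dd (A : Fin r → Matrix (Fin m) (Fin m) ℝ) (ε : ℝ) : ℝ :=
  ⨆ x : {x : Fin m → ℝ // ‖x‖ = 1}, bigN A ε x

/-- The normalized approximate extremal norms along `ε = 1/(k+1)`. -/
noncomputable def ff (A : Fin r → Matrix (Fin m) (Fin m) ℝ) (k : ℕ)
    (x : Fin m → ℝ) : ℝ :=
  (Dd A (1 / ((k : ℝ) + 1)))⁻¹ * bigN A (1 / ((k : ℝ) + 1)) x

variable {A : Fin r → Matrix (Fin m) (Fin m) ℝ}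

lemma exists_unit_vector (hm0 : 0 < m) : ∃ x : Fin m → ℝ, ‖x‖ = 1 := by
  have : Nonempty (Fin m) := ⟨⟨0, hm0⟩⟩
  exact ⟨fun _ => (1 : ℝ), by rw [pi_norm_const]; exact norm_one⟩

/-- Consolidated properties of the functions `ff A k`. -/
lemma ff_props (hm0 : 0 < m) (hr : 1 ≤ r) (k : ℕ) :
    (∀ x, 0 ≤ ff A k x) ∧ (∀ x, ff A k x ≤ ‖x‖) ∧
      (∀ (t : ℝ) (x), ff A k (t • x) = |t| * ff A k x) ∧
      (∀ x y, ff A k (x + y) ≤ ff A k x + ff A k y) ∧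
      (∀ (i : Fin r) (x), ff A k ((A i).mulVec x) ≤
        (jsr A + 1 / ((k : ℝ) + 1)) * ff A k x) ∧
      (∃ x, ‖x‖ = 1 ∧ 1 / 2 ≤ ff A k x) := by
  set ε : ℝ := 1 / ((k : ℝ) + 1) with hεdef
  have hε : 0 < ε := by positivity
  obtain ⟨C, hC1, hC⟩ := exists_C (A := A) hr hε
  have hsne : Nonempty {x : Fin m → ℝ // ‖x‖ = 1} := by
    obtain ⟨x, hx⟩ := exists_unit_vector hm0
    exact ⟨⟨x, hx⟩⟩
  have hsbdd : BddAbove (Set.range fun x : {x : Fin m → ℝ // ‖x‖ = 1} => bigN A ε x) := by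
    refine ⟨C, ?_⟩
    rintro b ⟨⟨x, hx⟩, rfl⟩
    simpa [hx] using bigN_le hr hε hC x
  have hD1 : 1 ≤ Dd A ε := by
    obtain ⟨⟨x, hx⟩⟩ := hsne
    have := le_ciSup (f := fun x : {x : Fin m → ℝ // ‖x‖ = 1} => bigN A ε x) hsbdd ⟨x, hx⟩
    calc (1:ℝ) = ‖x‖ := hx.symm
      _ ≤ bigN A ε x := norm_le_bigN hr hε hC x
      _ ≤ Dd A ε := this
  have hD0 : 0 < Dd A ε := lt_of_lt_of_le one_pos hD1
  have hbigN_zero : bigN A ε 0 = 0 := by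
    have h1 := bigN_le hr hε hC (0 : Fin m → ℝ)
    have h2 := bigN_nonneg hr hε hC (0 : Fin m → ℝ)
    simp only [norm_zero, mul_zero] at h1
    linarith
  have hle : ∀ x, bigN A ε x ≤ Dd A ε * ‖x‖ := by
    intro x
    rcases eq_or_ne x 0 with rfl | hx
    · simp [hbigN_zero]
    · have hxn : (0:ℝ) < ‖x‖ := norm_pos_iff.mpr hx
      have hunit : ‖‖x‖⁻¹ • x‖ = 1 := norm_smul_inv_norm (𝕜 := ℝ) hx
      have h1 : bigN A ε (‖x‖⁻¹ • x) ≤ Dd A ε :=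
        le_ciSup (f := fun x : {x : Fin m → ℝ // ‖x‖ = 1} => bigN A ε x) hsbdd ⟨_, hunit⟩
      have h2 : bigN A ε x = ‖x‖ * bigN A ε (‖x‖⁻¹ • x) := by
        rw [bigN_smul, abs_of_nonneg (by positivity)]
        have : (‖x‖⁻¹ : ℝ) • x = ‖x‖⁻¹ • x := rfl
        field_simp
      rw [h2, mul_comm (Dd A ε) ‖x‖]
      exact mul_le_mul_of_nonneg_left h1 hxn.le
  refine ⟨?_, ?_, ?_, ?_, ?_, ?_⟩
  · intro x
    exact mul_nonneg (by positivity) (bigN_nonneg hr hε hC x)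
  · intro x
    rw [ff, ← hεdef]
    rw [inv_mul_le_iff₀ hD0]
    exact hle x
  · intro t x
    rw [ff, ff, ← hεdef, bigN_smul]
    ring
  · intro x y
    rw [ff, ff, ff, ← hεdef, ← mul_add]
    exact mul_le_mul_of_nonneg_left (bigN_add hr hε hC x y) (by positivity)
  · intro i x
    rw [ff, ff, ← hεdef]
    calc (Dd A ε)⁻¹ * bigN A ε ((A i).mulVec x)
        ≤ (Dd A ε)⁻¹ * ((jsr A + ε) * bigN A ε x) :=
          mul_le_mul_of_nonneg_left (bigN_mulVec_le hr hε hC i x) (by positivity)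
      _ = (jsr A + ε) * ((Dd A ε)⁻¹ * bigN A ε x) := by ring
  · have hhalf : Dd A ε / 2 < Dd A ε := by linarith
    rw [Dd] at hhalf
    obtain ⟨⟨x, hx⟩, hlt⟩ := exists_lt_of_lt_ciSup hhalf
    refine ⟨x, hx, ?_⟩
    rw [ff, ← hεdef]
    rw [le_inv_mul_iff₀ hD0]
    calc Dd A ε * (1/2) = Dd A ε / 2 := by ring
      _ ≤ bigN A ε x := hlt.le

end AuxFF

section AuxMM

variable {m r : ℕ}

/-- The limit extremal seminorm: `limsup` of the normalized approximants. -/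
noncomputable def MM (A : Fin r → Matrix (Fin m) (Fin m) ℝ) (x : Fin m → ℝ) : ℝ :=
  Filter.atTop.limsup fun k => ff A k x

variable {A : Fin r → Matrix (Fin m) (Fin m) ℝ}

lemma ff_bddU (hm0 : 0 < m) (hr : 1 ≤ r) (x : Fin m → ℝ) :
    IsBoundedUnder (· ≤ ·) Filter.atTop (fun k => ff A k x) :=
  isBoundedUnder_of_eventually_le (a := ‖x‖)
    (Filter.Eventually.of_forall fun k => (ff_props (A := A) hm0 hr k).2.1 x)

lemma ff_bddL (hm0 : 0 < m) (hr : 1 ≤ r) (x : Fin m → ℝ) :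
    IsBoundedUnder (· ≥ ·) Filter.atTop (fun k => ff A k x) :=
  isBoundedUnder_of_eventually_ge (a := 0)
    (Filter.Eventually.of_forall fun k => (ff_props (A := A) hm0 hr k).1 x)

lemma MM_nonneg (hm0 : 0 < m) (hr : 1 ≤ r) (x : Fin m → ℝ) : 0 ≤ MM A x :=
  le_limsup_of_frequently_le
    (Filter.Frequently.of_forall fun k => (ff_props (A := A) hm0 hr k).1 x) (ff_bddU hm0 hr x)

lemma MM_le_norm (hm0 : 0 < m) (hr : 1 ≤ r) (x : Fin m → ℝ) : MM A x ≤ ‖x‖ :=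
  limsup_le_of_le ((ff_bddL hm0 hr x).isCoboundedUnder_le)
    (Filter.Eventually.of_forall fun k => (ff_props (A := A) hm0 hr k).2.1 x)

lemma MM_smul (hm0 : 0 < m) (hr : 1 ≤ r) (t : ℝ) (x : Fin m → ℝ) :
    MM A (t • x) = |t| * MM A x := by
  have hfun : (fun k => ff A k (t • x)) = fun k => |t| * ff A k x :=
    funext fun k => (ff_props (A := A) hm0 hr k).2.2.1 t x
  rw [MM, MM, hfun]
  exact (Monotone.map_limsup_of_continuousAt
    (f := fun y : ℝ => |t| * y)
    (fun a b hab => mul_le_mul_of_nonneg_left hab (abs_nonneg t))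
    (fun k => ff A k x)
    ((continuous_const.mul continuous_id).continuousAt)
    (ff_bddU hm0 hr x) ((ff_bddL hm0 hr x).isCoboundedUnder_le)).symm

lemma MM_zero (hm0 : 0 < m) (hr : 1 ≤ r) : MM A 0 = 0 := by
  have h := MM_smul (A := A) hm0 hr 0 0
  rwa [smul_zero, abs_zero, zero_mul] at h

lemma MM_add (hm0 : 0 < m) (hr : 1 ≤ r) (x y : Fin m → ℝ) :
    MM A (x + y) ≤ MM A x + MM A y := by
  have h1 : Filter.atTop.limsup (fun k => ff A k (x + y)) ≤
      Filter.atTop.limsup ((fun k => ff A k x) + fun k => ff A k y) := by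
    apply limsup_le_limsup
    · exact Filter.Eventually.of_forall fun k => (ff_props (A := A) hm0 hr k).2.2.2.1 x y
    · exact (ff_bddL hm0 hr (x + y)).isCoboundedUnder_le
    · exact isBoundedUnder_le_add (ff_bddU hm0 hr x) (ff_bddU hm0 hr y)
  have h2 := limsup_add_le (f := Filter.atTop)
    (u := fun k => ff A k x) (v := fun k => ff A k y)
    (ff_bddL hm0 hr x) (ff_bddU hm0 hr x)
    ((ff_bddL hm0 hr y).isCoboundedUnder_le) (ff_bddU hm0 hr y)
  exact h1.trans h2

lemma MM_mulVec (hm0 : 0 < m) (hr : 1 ≤ r) (i : Fin r) (x : Fin m → ℝ) :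
    MM A ((A i).mulVec x) ≤ jsr A * MM A x := by
  have hρ := jsr_nonneg (A := A) hr
  set v : ℕ → ℝ := fun k => jsr A * ff A k x with hv
  set w : ℕ → ℝ := fun k => (1 / ((k : ℝ) + 1)) * ‖x‖ with hw
  have hvU : IsBoundedUnder (· ≤ ·) Filter.atTop v := by
    apply isBoundedUnder_of_eventually_le (a := jsr A * ‖x‖)
    exact Filter.Eventually.of_forall fun k =>
      mul_le_mul_of_nonneg_left ((ff_props (A := A) hm0 hr k).2.1 x) hρ
  have hvL : IsBoundedUnder (· ≥ ·) Filter.atTop v := by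
    apply isBoundedUnder_of_eventually_ge (a := 0)
    exact Filter.Eventually.of_forall fun k =>
      mul_nonneg hρ ((ff_props (A := A) hm0 hr k).1 x)
  have hwtend : Filter.Tendsto w Filter.atTop (𝓝 0) := by
    have := tendsto_one_div_add_atTop_nhds_zero_nat.mul_const ‖x‖
    simpa [hw] using this
  have hwU : IsBoundedUnder (· ≤ ·) Filter.atTop w := hwtend.isBoundedUnder_le
  have hwL : IsBoundedUnder (· ≥ ·) Filter.atTop w := hwtend.isBoundedUnder_ge
  have h1 : Filter.atTop.limsup (fun k => ff A k ((A i).mulVec x)) ≤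
      Filter.atTop.limsup (v + w) := by
    apply limsup_le_limsup
    · apply Filter.Eventually.of_forall
      intro k
      have hb := (ff_props (A := A) hm0 hr k).2.2.2.2.1 i x
      have hb2 : ff A k x ≤ ‖x‖ := (ff_props (A := A) hm0 hr k).2.1 x
      have hε : (0:ℝ) ≤ 1 / ((k : ℝ) + 1) := by positivity
      calc ff A k ((A i).mulVec x) ≤ (jsr A + 1 / ((k : ℝ) + 1)) * ff A k x := hb
        _ = jsr A * ff A k x + (1 / ((k : ℝ) + 1)) * ff A k x := by ring
        _ ≤ v k + w k := by
            apply add_le_add le_rfl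
            exact mul_le_mul_of_nonneg_left hb2 hε
    · exact (ff_bddL hm0 hr _).isCoboundedUnder_le
    · exact isBoundedUnder_le_add hvU hwU
  have h2 : Filter.atTop.limsup (v + w) ≤
      Filter.atTop.limsup v + Filter.atTop.limsup w :=
    limsup_add_le hvL hvU (hwL.isCoboundedUnder_le) hwU
  have h3 : Filter.atTop.limsup v = jsr A * MM A x := by
    exact (Monotone.map_limsup_of_continuousAt
      (f := fun y : ℝ => jsr A * y)
      (fun a b hab => mul_le_mul_of_nonneg_left hab hρ)
      (fun k => ff A k x)
      ((continuous_const.mul continuous_id).continuousAt)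
      (ff_bddU hm0 hr x) ((ff_bddL hm0 hr x).isCoboundedUnder_le)).symm
  have h4 : Filter.atTop.limsup w = 0 := hwtend.limsup_eq
  calc MM A ((A i).mulVec x) ≤ Filter.atTop.limsup (v + w) := h1
    _ ≤ Filter.atTop.limsup v + Filter.atTop.limsup w := h2
    _ = jsr A * MM A x := by rw [h3, h4, add_zero]

lemma MM_pos_somewhere (hm0 : 0 < m) (hr : 1 ≤ r) :
    ∃ xs : Fin m → ℝ, ‖xs‖ = 1 ∧ 1 / 4 ≤ MM A xs := by
  have hchoice : ∀ k : ℕ, ∃ x : Fin m → ℝ, ‖x‖ = 1 ∧ 1 / 2 ≤ ff A k x :=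
    fun k => (ff_props (A := A) hm0 hr k).2.2.2.2.2
  choose x hx1 hxhalf using hchoice
  have hmem : ∀ k, x k ∈ Metric.sphere (0 : Fin m → ℝ) 1 := by
    intro k
    rw [mem_sphere_zero_iff_norm]
    exact hx1 k
  obtain ⟨xs, hxsS, φ, hφ, hconv⟩ :=
    (isCompact_sphere (0 : Fin m → ℝ) 1).tendsto_subseq hmem
  have hxs1 : ‖xs‖ = 1 := mem_sphere_zero_iff_norm.mp hxsS
  refine ⟨xs, hxs1, ?_⟩
  have hkey : ∀ k, ff A k (x k) ≤ ff A k xs + ‖x k - xs‖ := by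
    intro k
    have h1 : ff A k (x k) = ff A k (xs + (x k - xs)) := by
      congr 1; abel
    rw [h1]
    calc ff A k (xs + (x k - xs)) ≤ ff A k xs + ff A k (x k - xs) :=
          (ff_props (A := A) hm0 hr k).2.2.2.1 _ _
      _ ≤ ff A k xs + ‖x k - xs‖ := add_le_add le_rfl ((ff_props (A := A) hm0 hr k).2.1 _)
  have hev : ∀ᶠ j in Filter.atTop, dist ((x ∘ φ) j) xs < 1 / 4 :=
    (Metric.tendsto_nhds.mp hconv) (1 / 4) (by norm_num)
  obtain ⟨j₀, hj₀⟩ := Filter.eventually_atTop.mp hev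
  have hfreq : ∃ᶠ k in Filter.atTop, 1 / 4 ≤ ff A k xs := by
    rw [Filter.frequently_atTop]
    intro K
    refine ⟨φ (max j₀ K), ?_, ?_⟩
    · exact le_trans (le_max_right j₀ K) hφ.le_apply
    · have hd := hj₀ (max j₀ K) (le_max_left j₀ K)
      have hd' : ‖x (φ (max j₀ K)) - xs‖ < 1 / 4 := by
        rwa [← dist_eq_norm]
      have h1 := hkey (φ (max j₀ K))
      have h2 := hxhalf (φ (max j₀ K))
      linarith
  exact le_limsup_of_frequently_le hfreq (ff_bddU hm0 hr xs)

lemma MM_lip (hm0 : 0 < m) (hr : 1 ≤ r) (x y : Fin m → ℝ) :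
    MM A x ≤ MM A y + ‖x - y‖ := by
  have h1 : MM A x = MM A (y + (x - y)) := by congr 1; abel
  rw [h1]
  calc MM A (y + (x - y)) ≤ MM A y + MM A (x - y) := MM_add hm0 hr _ _
    _ ≤ MM A y + ‖x - y‖ := add_le_add le_rfl (MM_le_norm hm0 hr _)

lemma MM_continuous (hm0 : 0 < m) (hr : 1 ≤ r) : Continuous (MM A) := by
  have : LipschitzWith 1 (MM A) := by
    apply LipschitzWith.of_dist_le_mul
    intro x y
    rw [Real.dist_eq, dist_eq_norm, NNReal.coe_one, one_mul, abs_sub_le_iff]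
    constructor
    · linarith [MM_lip (A := A) hm0 hr x y]
    · have := MM_lip (A := A) hm0 hr y x
      rw [norm_sub_rev] at this
      linarith
  exact this.continuous

lemma MM_definite (hm0 : 0 < m) (hr : 1 ≤ r) (hA : IsIrreducibleFamily A) :
    ∀ x, MM A x = 0 → x = 0 := by
  set W : Submodule ℝ (Fin m → ℝ) :=
    { carrier := {x | MM A x = 0}
      add_mem' := by
        intro a b ha hb
        have h1 := MM_add (A := A) hm0 hr a b
        have h2 := MM_nonneg (A := A) hm0 hr (a + b)
        simp only [Set.mem_setOf_eq] at ha hb ⊢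
        linarith
      zero_mem' := by
        simp only [Set.mem_setOf_eq]
        exact MM_zero hm0 hr
      smul_mem' := by
        intro c a ha
        simp only [Set.mem_setOf_eq] at ha ⊢
        rw [MM_smul hm0 hr, ha, mul_zero] } with hWdef
  have hinv : ∀ i, ∀ x ∈ W, (A i).mulVec x ∈ W := by
    intro i x hx
    have hx' : MM A x = 0 := hx
    have h1 := MM_mulVec (A := A) hm0 hr i x
    have h2 := MM_nonneg (A := A) hm0 hr ((A i).mulVec x)
    show MM A ((A i).mulVec x) = 0
    rw [hx', mul_zero] at h1
    linarith
  rcases hA W hinv with hbot | htop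
  · intro x hx
    have : x ∈ W := hx
    rw [hbot] at this
    simpa using this
  · exfalso
    obtain ⟨xs, hxs1, hxs⟩ := MM_pos_somewhere (A := A) hm0 hr
    have : xs ∈ W := by rw [htop]; trivial
    have hz : MM A xs = 0 := this
    rw [hz] at hxs
    norm_num at hxs

lemma MM_lower (hm0 : 0 < m) (hr : 1 ≤ r) (hA : IsIrreducibleFamily A) :
    ∃ c : ℝ, 0 < c ∧ ∀ x, c * ‖x‖ ≤ MM A x := by
  obtain ⟨x₀, hx₀⟩ := exists_unit_vector (m := m) hm0
  have hx₀S : x₀ ∈ Metric.sphere (0 : Fin m → ℝ) 1 := by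
    rwa [mem_sphere_zero_iff_norm]
  obtain ⟨z, hzS, hz⟩ := (isCompact_sphere (0 : Fin m → ℝ) 1).exists_isMinOn
    ⟨x₀, hx₀S⟩ ((MM_continuous (A := A) hm0 hr).continuousOn)
  have hz1 : ‖z‖ = 1 := mem_sphere_zero_iff_norm.mp hzS
  have hzne : z ≠ 0 := by
    intro h
    rw [h, norm_zero] at hz1
    norm_num at hz1
  have hc0 : 0 < MM A z := by
    rcases lt_or_eq_of_le (MM_nonneg (A := A) hm0 hr z) with h | h
    · exact h
    · exact absurd (MM_definite hm0 hr hA z h.symm) hzne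
  refine ⟨MM A z, hc0, ?_⟩
  intro x
  rcases eq_or_ne x 0 with rfl | hx
  · rw [norm_zero, mul_zero, MM_zero hm0 hr]
  · have hxn : (0:ℝ) < ‖x‖ := norm_pos_iff.mpr hx
    have hunit : ‖‖x‖⁻¹ • x‖ = 1 := norm_smul_inv_norm (𝕜 := ℝ) hx
    have hmem : (‖x‖⁻¹ • x) ∈ Metric.sphere (0 : Fin m → ℝ) 1 := by
      rwa [mem_sphere_zero_iff_norm]
    have hmin : MM A z ≤ MM A (‖x‖⁻¹ • x) := isMinOn_iff.mp hz _ hmem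
    have hsm : MM A x = ‖x‖ * MM A (‖x‖⁻¹ • x) := by
      have : x = ‖x‖ • (‖x‖⁻¹ • x) := by
        rw [smul_smul, mul_inv_cancel₀ hxn.ne', one_smul]
      conv_lhs => rw [this]
      rw [MM_smul hm0 hr, abs_of_pos hxn]
    rw [hsm, mul_comm (MM A z) ‖x‖]
    exact mul_le_mul_of_nonneg_left hmin hxn.le

end AuxMM

/-- an irreducible family admits an extremal norm, i.e. a norm `‖·‖` with
`‖A_i x‖ ≤ ρ(𝒜) ‖x‖` for all `i, x`; equivalently the infimum of the induced operator norms
`max_i ‖A_i‖` over all norms equals `ρ(𝒜)` and is attained. -/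
theorem stmt18 {m r : ℕ} (hm : 2 ≤ m) (hr : 1 ≤ r)
    (A : Fin r → Matrix (Fin m) (Fin m) ℝ) (hA : IsIrreducibleFamily A) :
    ∃ N : (Fin m → ℝ) → ℝ, IsNorm N ∧
      (∀ (i : Fin r) (x), N ((A i).mulVec x) ≤ jsr A * N x) ∧
      rhoSup A N = jsr A := by
  classical
  have hm0 : 0 < m := by omega
  haveI hFr : Nonempty (Fin r) := ⟨⟨0, hr⟩⟩
  have hρ := jsr_nonneg (A := A) hr
  obtain ⟨c, hc0, hcl⟩ := MM_lower (A := A) hm0 hr hA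
  have hpos : ∀ x : Fin m → ℝ, x ≠ 0 → 0 < MM A x := by
    intro x hx
    rcases lt_or_eq_of_le (MM_nonneg (A := A) hm0 hr x) with h | h
    · exact h
    · exact absurd (MM_definite hm0 hr hA x h.symm) hx
  have hmaxA_bdd : ∀ x : Fin m → ℝ, maxA A (MM A) x ≤ jsr A * MM A x := fun x =>
    ciSup_le fun i => MM_mulVec hm0 hr i x
  have hmemmax : ∀ (i : Fin r) (x : Fin m → ℝ),
      MM A ((A i).mulVec x) ≤ maxA A (MM A) x := by
    intro i x
    exact le_ciSup (f := fun i => MM A ((A i).mulVec x))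
      (Set.Finite.bddAbove (Set.finite_range _)) i
  obtain ⟨x₀, hx₀⟩ := exists_unit_vector (m := m) hm0
  have hx₀ne : x₀ ≠ 0 := by
    intro h; rw [h, norm_zero] at hx₀; norm_num at hx₀
  set S := (fun x => maxA A (MM A) x / MM A x) '' {x : Fin m → ℝ | x ≠ 0} with hS
  have hrho_eq : rhoSup A (MM A) = sSup S := rfl
  have hSne : S.Nonempty := ⟨_, ⟨x₀, hx₀ne, rfl⟩⟩
  have hub : ∀ y ∈ S, y ≤ jsr A := by
    rintro y ⟨x, hx, rfl⟩
    exact (div_le_iff₀ (hpos x hx)).mpr (hmaxA_bdd x)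
  have hrhoLe : rhoSup A (MM A) ≤ jsr A := by
    rw [hrho_eq]; exact csSup_le hSne hub
  set s := rhoSup A (MM A) with hsdef
  have hSbdd : BddAbove S := ⟨jsr A, hub⟩
  have hsmem : ∀ x : Fin m → ℝ, x ≠ 0 → maxA A (MM A) x / MM A x ≤ s :=
    fun x hx => le_csSup hSbdd ⟨x, hx, rfl⟩
  have hs0 : 0 ≤ s := by
    have h1 : 0 ≤ maxA A (MM A) x₀ / MM A x₀ :=
      div_nonneg ((MM_nonneg (A := A) hm0 hr _).trans
        (hmemmax (Classical.arbitrary (Fin r)) x₀)) (MM_nonneg (A := A) hm0 hr x₀)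
    exact h1.trans (hsmem x₀ hx₀ne)
  have hstep : ∀ (i : Fin r) (x : Fin m → ℝ), MM A ((A i).mulVec x) ≤ s * MM A x := by
    intro i x
    rcases eq_or_ne x 0 with rfl | hx
    · rw [Matrix.mulVec_zero, MM_zero hm0 hr, mul_zero]
    · have h1 := hmemmax i x
      have h2 := (div_le_iff₀ (hpos x hx)).mp (hsmem x hx)
      linarith
  have hword : ∀ (n : ℕ) (w : Fin n → Fin r) (x : Fin m → ℝ),
      MM A ((wordProd A w).mulVec x) ≤ s ^ n * MM A x := by
    intro n
    induction n with
    | zero =>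
      intro w x
      rw [wordProd_zero, Matrix.one_mulVec, pow_zero, one_mul]
    | succ n ih =>
      intro w x
      rw [wordProd_succ, ← Matrix.mulVec_mulVec]
      calc MM A ((A (w 0)).mulVec ((wordProd A (w ∘ Fin.succ)).mulVec x))
          ≤ s * MM A ((wordProd A (w ∘ Fin.succ)).mulVec x) := hstep _ _
        _ ≤ s * (s ^ n * MM A x) := mul_le_mul_of_nonneg_left (ih _ _) hs0
        _ = s ^ (n + 1) * MM A x := by ring
  have hseq : ∀ n, seqA A n ≤ c⁻¹ * s ^ n := by
    intro n
    apply seqA_le hr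
    intro w
    apply matNorm_le_bound (by positivity)
    intro x
    have hn1 : ‖(wordProd A w).mulVec x‖ ≤ c⁻¹ * MM A ((wordProd A w).mulVec x) := by
      rw [le_inv_mul_iff₀ hc0]
      exact hcl _
    calc ‖(wordProd A w).mulVec x‖ ≤ c⁻¹ * MM A ((wordProd A w).mulVec x) := hn1
      _ ≤ c⁻¹ * (s ^ n * MM A x) :=
        mul_le_mul_of_nonneg_left (hword n w x) (by positivity)
      _ ≤ c⁻¹ * (s ^ n * ‖x‖) := by
        apply mul_le_mul_of_nonneg_left _ (by positivity)
        exact mul_le_mul_of_nonneg_left (MM_le_norm hm0 hr x) (by positivity)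
      _ = (c⁻¹ * s ^ n) * ‖x‖ := by ring
  have hjsrLe : jsr A ≤ s := by
    have hc' : (0:ℝ) < c⁻¹ := by positivity
    have hev : ∀ᶠ n in Filter.atTop,
        seqA A n ^ (1 / (n : ℝ)) ≤ (c⁻¹) ^ (1 / (n : ℝ)) * s := by
      filter_upwards [Filter.eventually_ge_atTop 1] with n hn
      have hn' : (n : ℝ) ≠ 0 := Nat.cast_ne_zero.mpr (by omega)
      calc seqA A n ^ (1 / (n : ℝ)) ≤ (c⁻¹ * s ^ n) ^ (1 / (n : ℝ)) :=
            Real.rpow_le_rpow (seqA_nonneg hr n) (hseq n) (by positivity)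
        _ = (c⁻¹) ^ (1 / (n : ℝ)) * (s ^ n) ^ (1 / (n : ℝ)) :=
            Real.mul_rpow hc'.le (by positivity)
        _ = (c⁻¹) ^ (1 / (n : ℝ)) * s := by
            rw [← Real.rpow_natCast s n, ← Real.rpow_mul hs0, mul_one_div,
              div_self hn', Real.rpow_one]
    have htend : Filter.Tendsto (fun n : ℕ => (c⁻¹ : ℝ) ^ (1 / (n : ℝ)) * s)
        Filter.atTop (𝓝 s) := by
      have h1 : Filter.Tendsto (fun n : ℕ => (c⁻¹ : ℝ) ^ (1 / (n : ℝ)))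
          Filter.atTop (𝓝 1) := by
        simp only [Real.rpow_def_of_pos hc']
        have h2 : Filter.Tendsto (fun n : ℕ => Real.log c⁻¹ * (1 / (n : ℝ)))
            Filter.atTop (𝓝 0) := by
          simpa using tendsto_one_div_atTop_nhds_zero_nat.const_mul (Real.log c⁻¹)
        simpa [Function.comp_def] using (Real.continuous_exp.continuousAt (x := 0)).tendsto.comp h2
      simpa using h1.mul_const s
    rw [jsr_eq]
    calc Filter.atTop.limsup (fun n : ℕ => seqA A n ^ (1 / (n : ℝ)))
        ≤ Filter.atTop.limsup (fun n : ℕ => (c⁻¹ : ℝ) ^ (1 / (n : ℝ)) * s) := by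
          exact limsup_le_limsup hev
            ((isBoundedUnder_of_eventually_ge (a := (0:ℝ))
              (Filter.Eventually.of_forall fun n =>
                Real.rpow_nonneg (seqA_nonneg hr n) _)).isCoboundedUnder_le)
            htend.isBoundedUnder_le
      _ = s := htend.limsup_eq
  refine ⟨MM A, ⟨fun x => MM_nonneg hm0 hr x, MM_definite hm0 hr hA,
    fun t x => MM_smul hm0 hr t x, fun x y => MM_add hm0 hr x y⟩,
    fun i x => MM_mulVec hm0 hr i x, le_antisymm hrhoLe hjsrLe⟩
end

section
/- Let 𝒜 = {A_1, …, A_r} be an irreducible finite set of real m×m matrices, let ρ ≥ 0, and let p be a seminorm on ℝ^m that is not identically zero and satisfies the Barabanov condition ρ·p(x) = max_{1≤i≤r} p(A_i x) for all x ∈ ℝ^m. Then p is a norm on ℝ^m and ρ = ρ(𝒜); in particular p is a Barabanov norm for 𝒜. -/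
open Matrix Filter Topology Bornology Pointwise

lemma sm_zero {m : ℕ} {p : (Fin m → ℝ) → ℝ} (hp : IsSeminorm p) : p 0 = 0 := by
  have := hp.2.1 0 0; simpa using this

lemma sm_neg {m : ℕ} {p : (Fin m → ℝ) → ℝ} (hp : IsSeminorm p) (x : Fin m → ℝ) :
    p (-x) = p x := by
  have := hp.2.1 (-1) x; simpa using this

lemma sm_sum_le {m : ℕ} {p : (Fin m → ℝ) → ℝ} (hp : IsSeminorm p)
    {ι : Type*} (s : Finset ι) (f : ι → (Fin m → ℝ)) :
    p (∑ i ∈ s, f i) ≤ ∑ i ∈ s, p (f i) := by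
  classical
  induction s using Finset.induction with
  | empty => simp [sm_zero hp]
  | insert _ _ h ih =>
      rw [Finset.sum_insert h, Finset.sum_insert h]
      exact (hp.2.2 _ _).trans (by linarith)

lemma sm_upper {m : ℕ} {p : (Fin m → ℝ) → ℝ} (hp : IsSeminorm p) :
    ∃ C : ℝ, 0 < C ∧ ∀ x, p x ≤ C * ‖x‖ := by
  classical
  have hS : (0:ℝ) ≤ ∑ i : Fin m, p (fun j => if i = j then (1:ℝ) else 0) :=
    Finset.sum_nonneg fun i _ => hp.1 _
  refine ⟨(∑ i, p (fun j => if i = j then (1:ℝ) else 0)) + 1, by linarith, fun x => ?_⟩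
  have h1 : p x ≤ ∑ i, p (x i • fun j => if i = j then (1:ℝ) else 0) := by
    calc p x = p (∑ i, x i • fun j => if i = j then (1:ℝ) else 0) := by
          rw [← pi_eq_sum_univ x]
      _ ≤ _ := sm_sum_le hp _ _
  have h2 : ∀ i : Fin m, p (x i • fun j => if i = j then (1:ℝ) else 0)
      ≤ p (fun j => if i = j then (1:ℝ) else 0) * ‖x‖ := by
    intro i
    rw [hp.2.1, mul_comm]
    have hxi : |x i| ≤ ‖x‖ := by simpa [Real.norm_eq_abs] using norm_le_pi_norm x i
    exact mul_le_mul_of_nonneg_left hxi (hp.1 _)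
  calc p x ≤ ∑ i, p (fun j => if i = j then (1:ℝ) else 0) * ‖x‖ :=
        h1.trans (Finset.sum_le_sum fun i _ => h2 i)
    _ = (∑ i, p (fun j => if i = j then (1:ℝ) else 0)) * ‖x‖ := by
        rw [Finset.sum_mul]
    _ ≤ _ := by nlinarith [norm_nonneg x]

lemma sm_continuous {m : ℕ} {p : (Fin m → ℝ) → ℝ} (hp : IsSeminorm p) :
    Continuous p := by
  obtain ⟨C, hC, hCb⟩ := sm_upper hp
  refine (LipschitzWith.of_dist_le_mul (K := ⟨C, hC.le⟩) fun x y => ?_).continuous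
  have key : ∀ a b : Fin m → ℝ, p a - p b ≤ C * ‖a - b‖ := by
    intro a b
    have : p a ≤ p b + p (a - b) := by
      have := hp.2.2 b (a - b); simpa using this
    have h2 := hCb (a - b)
    linarith
  rw [Real.dist_eq, dist_eq_norm]
  have h2 := key y x
  rw [norm_sub_rev] at h2
  exact abs_sub_le_iff.mpr ⟨key x y, h2⟩

lemma sm_lower {m : ℕ} (hm : 1 ≤ m) {p : (Fin m → ℝ) → ℝ} (hp : IsSeminorm p)
    (hdef : ∀ x, p x = 0 → x = 0) :
    ∃ c : ℝ, 0 < c ∧ ∀ x, c * ‖x‖ ≤ p x := by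
  haveI : NeZero m := ⟨by omega⟩
  have hne : (Metric.sphere (0 : Fin m → ℝ) 1).Nonempty := by
    refine ⟨fun _ => 1, ?_⟩
    have : ‖fun _ : Fin m => (1:ℝ)‖ = 1 := by
      simp [pi_norm_const (1:ℝ)]
    simpa using this
  obtain ⟨z, hz, hzmin⟩ := (isCompact_sphere (0 : Fin m → ℝ) 1).exists_isMinOn hne
    (sm_continuous hp).continuousOn
  have hz1 : ‖z‖ = 1 := by simpa using hz
  have hzne : z ≠ 0 := by intro h; rw [h] at hz1; simp at hz1
  have hc : 0 < p z := lt_of_le_of_ne (hp.1 z) fun h => hzne (hdef z h.symm)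
  refine ⟨p z, hc, fun x => ?_⟩
  rcases eq_or_ne x 0 with rfl | hx
  · simp [sm_zero hp]
  · have hnx : (0:ℝ) < ‖x‖ := norm_pos_iff.mpr hx
    have hu : ‖x‖⁻¹ • x ∈ Metric.sphere (0 : Fin m → ℝ) 1 := by
      simp [norm_smul, abs_of_pos (inv_pos.mpr hnx), inv_mul_cancel₀ hnx.ne']
    have hmin : p z ≤ p (‖x‖⁻¹ • x) := hzmin hu
    have hpx : p (‖x‖⁻¹ • x) = ‖x‖⁻¹ * p x := by
      rw [hp.2.1, abs_of_pos (inv_pos.mpr hnx)]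
    rw [hpx] at hmin
    calc p z * ‖x‖ = ‖x‖ * p z := mul_comm _ _
      _ ≤ ‖x‖ * (‖x‖⁻¹ * p x) := mul_le_mul_of_nonneg_left hmin hnx.le
      _ = p x := by field_simp

/-- a not identically zero seminorm `p` satisfying the Barabanov condition
`ρ p x = max_i p (A_i x)` for an irreducible family is a norm, and `ρ = ρ(𝒜)`;
in particular `p` is a Barabanov norm for `𝒜`. -/

theorem stmt19 {m r : ℕ} (hm : 2 ≤ m) (hr : 1 ≤ r)
    (A : Fin r → Matrix (Fin m) (Fin m) ℝ) (hA : IsIrreducibleFamily A)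
    (p : (Fin m → ℝ) → ℝ) (hp : IsSeminorm p) (hne : ∃ x, p x ≠ 0)
    (ρ : ℝ) (hρ : 0 ≤ ρ)
    (hbar : ∀ x, ρ * p x = maxA A p x) :
    IsNorm p ∧ ρ = jsr A := by
  haveI : NeZero m := ⟨by omega⟩
  haveI : Nonempty (Fin r) := ⟨⟨0, by omega⟩⟩
  simp only [maxA] at hbar
  have hbdd : ∀ x : Fin m → ℝ, BddAbove (Set.range fun i : Fin r => p ((A i).mulVec x)) :=
    fun x => Set.Finite.bddAbove (Set.finite_range _)
  have hle : ∀ (i : Fin r) (x), p ((A i).mulVec x) ≤ ρ * p x := fun i x => by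
    rw [hbar x]; exact le_ciSup (hbdd x) i
  have hex : ∀ x, ∃ i : Fin r, p ((A i).mulVec x) = ρ * p x := fun x => by
    obtain ⟨i, hi⟩ := exists_eq_ciSup_of_finite (f := fun i : Fin r => p ((A i).mulVec x))
    exact ⟨i, by rw [hi, ← hbar x]⟩
  -- definiteness
  have hdef : ∀ x, p x = 0 → x = 0 := by
    let W : Submodule ℝ (Fin m → ℝ) :=
      { carrier := {x | p x = 0}
        add_mem' := fun {a b} ha hb => le_antisymm
          ((hp.2.2 a b).trans (by simp_all)) (hp.1 _)
        zero_mem' := sm_zero hp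
        smul_mem' := fun t x hx => by
          have : p (t • x) = |t| * p x := hp.2.1 t x
          simp only [Set.mem_setOf_eq] at hx ⊢
          rw [this, hx, mul_zero] }
    have hmem : ∀ x, x ∈ W ↔ p x = 0 := fun x => Iff.rfl
    have hinv : ∀ i, ∀ x ∈ W, (A i).mulVec x ∈ W := by
      intro i x hx
      rw [hmem] at hx ⊢
      have h1 := hle i x
      rw [hx, mul_zero] at h1
      exact le_antisymm h1 (hp.1 _)
    rcases hA W hinv with h | h
    · intro x hx
      have : x ∈ W := (hmem x).mpr hx
      rw [h] at this
      simpa using this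
    · exfalso
      obtain ⟨x, hx⟩ := hne
      exact hx ((hmem x).mp (h ▸ Submodule.mem_top))
  have hnorm : IsNorm p := ⟨hp.1, hdef, hp.2.1, hp.2.2⟩
  refine ⟨hnorm, ?_⟩
  -- norm equivalence constants
  obtain ⟨C, hC, hCb⟩ := sm_upper hp
  obtain ⟨c, hc, hcb⟩ := sm_lower (by omega) hp hdef
  -- word estimates
  have word_le : ∀ (n : ℕ) (w : Fin n → Fin r) (x),
      p ((List.ofFn fun k => A (w k)).prod.mulVec x) ≤ ρ ^ n * p x := by
    intro n
    induction n with
    | zero => intro w x; simp [Matrix.one_mulVec]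
    | succ n ih =>
      intro w x
      rw [List.ofFn_succ, List.prod_cons, ← Matrix.mulVec_mulVec]
      calc p ((A (w 0)).mulVec ((List.ofFn fun k => A (w k.succ)).prod.mulVec x))
          ≤ ρ * p ((List.ofFn fun k => A (w k.succ)).prod.mulVec x) := hle _ _
        _ ≤ ρ * (ρ ^ n * p x) := mul_le_mul_of_nonneg_left (ih _ x) hρ
        _ = ρ ^ (n + 1) * p x := by ring
  have word_ex : ∀ (n : ℕ) (x), ∃ w : Fin n → Fin r,
      p ((List.ofFn fun k => A (w k)).prod.mulVec x) = ρ ^ n * p x := by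
    intro n
    induction n with
    | zero => intro x; exact ⟨fun k => k.elim0, by simp [Matrix.one_mulVec]⟩
    | succ n ih =>
      intro x
      obtain ⟨w, hw⟩ := ih x
      obtain ⟨i, hi⟩ := hex ((List.ofFn fun k => A (w k)).prod.mulVec x)
      refine ⟨(Fin.cons i w : Fin (n+1) → Fin r), ?_⟩
      have hl : (List.ofFn fun k : Fin (n+1) => A ((Fin.cons i w : Fin (n+1) → Fin r) k)) =
          A i :: List.ofFn fun k => A (w k) := by
        rw [List.ofFn_succ]
        simp [Fin.cons_zero, Fin.cons_succ]
      rw [hl, List.prod_cons, ← Matrix.mulVec_mulVec, hi, hw]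
      ring
  -- bounds on the sup of operator norms
  set g : ℕ → ℝ := fun n =>
    ⨆ w : Fin n → Fin r, matNorm (List.ofFn fun k => A (w k)).prod with hg
  have hgub : ∀ n, g n ≤ C / c * ρ ^ n := by
    intro n
    simp only [hg]
    refine ciSup_le fun w => ?_
    have key : ∀ x : Fin m → ℝ,
        ‖(List.ofFn fun k => A (w k)).prod.mulVec x‖ ≤ C / c * ρ ^ n * ‖x‖ := by
      intro x
      have h1 : p ((List.ofFn fun k => A (w k)).prod.mulVec x) ≤ ρ ^ n * (C * ‖x‖) :=
        (word_le n w x).trans (mul_le_mul_of_nonneg_left (hCb x) (pow_nonneg hρ n))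
      have h2 : c * ‖(List.ofFn fun k => A (w k)).prod.mulVec x‖ ≤
          p ((List.ofFn fun k => A (w k)).prod.mulVec x) := hcb _
      have h3 : c * ‖(List.ofFn fun k => A (w k)).prod.mulVec x‖ ≤ ρ ^ n * (C * ‖x‖) :=
        h2.trans h1
      rw [div_mul_eq_mul_div, div_mul_eq_mul_div, le_div_iff₀ hc, mul_comm _ c]
      nlinarith
    exact ContinuousLinearMap.opNorm_le_bound _
      (by positivity) fun x => key x
  have hglb : ∀ n, c / C * ρ ^ n ≤ g n := by
    intro n
    simp only [hg]
    obtain ⟨w, hw⟩ := word_ex n (fun _ => (1:ℝ))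
    have hx0 : ‖(fun _ : Fin m => (1:ℝ))‖ = 1 := by
      rw [pi_norm_const]; simp
    have hub : matNorm (List.ofFn fun k => A (w k)).prod ≤
        ⨆ w : Fin n → Fin r, matNorm (List.ofFn fun k => A (w k)).prod :=
      le_ciSup (f := fun w : Fin n → Fin r => matNorm (List.ofFn fun k => A (w k)).prod)
        (Set.Finite.bddAbove (Set.finite_range _)) w
    refine le_trans ?_ hub
    have hlo : ‖(List.ofFn fun k => A (w k)).prod.mulVec (fun _ => (1:ℝ))‖ ≤
        matNorm (List.ofFn fun k => A (w k)).prod := by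
      have := (LinearMap.toContinuousLinearMap
        ((List.ofFn fun k => A (w k)).prod.mulVecLin)).le_opNorm (fun _ => (1:ℝ))
      simpa [matNorm, hx0] using this
    refine le_trans ?_ hlo
    have hpl : c ≤ p (fun _ : Fin m => (1:ℝ)) := by
      have := hcb (fun _ : Fin m => (1:ℝ)); rwa [hx0, mul_one] at this
    have h1 : ρ ^ n * c ≤ p ((List.ofFn fun k => A (w k)).prod.mulVec (fun _ => (1:ℝ))) := by
      rw [hw]; exact mul_le_mul_of_nonneg_left hpl (pow_nonneg hρ n)
    have h2 : p ((List.ofFn fun k => A (w k)).prod.mulVec (fun _ => (1:ℝ))) ≤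
        C * ‖(List.ofFn fun k => A (w k)).prod.mulVec (fun _ => (1:ℝ))‖ := hCb _
    rw [div_mul_eq_mul_div, div_le_iff₀ hC]
    nlinarith
  -- convergence
  have htend : Tendsto (fun n : ℕ => g n ^ (1 / (n:ℝ))) atTop (𝓝 ρ) := by
    rcases eq_or_lt_of_le hρ with hρ0 | hρpos
    · -- ρ = 0
      subst hρ0
      refine Tendsto.congr' ?_ (tendsto_const_nhds : Tendsto (fun _ : ℕ => (0:ℝ)) atTop (𝓝 0))
      rw [EventuallyEq, eventually_atTop]
      refine ⟨1, fun n hn => ?_⟩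
      have hzg : g n = 0 := by
        have h1 : g n ≤ 0 := by
          have := hgub n
          rwa [zero_pow (by omega : n ≠ 0), mul_zero] at this
        have h2 : (0:ℝ) ≤ g n := by
          have := hglb n
          rwa [zero_pow (by omega : n ≠ 0), mul_zero] at this
        linarith
      rw [hzg, Real.zero_rpow (one_div_ne_zero (Nat.cast_ne_zero.mpr (by omega)))]
    · -- ρ > 0
      have key : ∀ K : ℝ, 0 < K →
          Tendsto (fun n : ℕ => (K * ρ ^ n) ^ (1 / (n:ℝ))) atTop (𝓝 ρ) := by
        intro K hK
        have h1 : Tendsto (fun n : ℕ => Real.log K * (1 / (n:ℝ))) atTop (𝓝 0) := by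
          simpa using tendsto_one_div_atTop_nhds_zero_nat.const_mul (Real.log K)
        have h2 : Tendsto (fun n : ℕ => K ^ (1 / (n:ℝ))) atTop (𝓝 1) := by
          have := (Real.continuous_exp.tendsto 0).comp h1
          rw [Real.exp_zero] at this
          refine this.congr fun n => ?_
          rw [Function.comp_apply, ← Real.rpow_def_of_pos hK]
        have h3 : Tendsto (fun n : ℕ => K ^ (1 / (n:ℝ)) * ρ) atTop (𝓝 ρ) := by
          have := h2.mul_const ρ
          rwa [one_mul] at this
        refine h3.congr' ?_
        rw [EventuallyEq, eventually_atTop]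
        refine ⟨1, fun n hn => ?_⟩
        have hn0 : (n:ℝ) ≠ 0 := Nat.cast_ne_zero.mpr (by omega)
        rw [Real.mul_rpow hK.le (pow_nonneg hρ n), ← Real.rpow_natCast ρ n,
          ← Real.rpow_mul hρ, mul_one_div_cancel hn0, Real.rpow_one]
      have hlow := key (c / C) (by positivity)
      have hup := key (C / c) (by positivity)
      refine tendsto_of_tendsto_of_tendsto_of_le_of_le hlow hup ?_ ?_
      · intro n
        exact Real.rpow_le_rpow (by positivity) (hglb n) (by positivity)
      · intro n
        exact Real.rpow_le_rpow
          (le_trans (by positivity) (hglb n)) (hgub n) (by positivity)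
  have : jsr A = ρ := htend.limsup_eq
  exact this.symm
end
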